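/- arXiv:1112.6147 — 6 statements merged into one kernel-verified Lean document; each statement's English description precedes it below -/
import Mathlib

section
/- Under the hypotheses giving F(t) = 2f(t)/(2 - e^{it}), the cosine transforms satisfy F_c(t) = (2/(5 - 4cos t))·f_c(t), where F_c(t) = ∫₀^∞ cos(xt) dh(x) and f_c(t) = ∫₀¹ cos(xt) dh(x). -/
open MeasureTheory Set Filter

/-- Under the Minkowski-type hypotheses on `h`, the cosine Fourier–Stieltjes transforms
satisfy `F_c t = (2/(5 - 4 cos t)) f_c t`. -/
theorem stmt4 (h : StieltjesFunction ℝ) (hcont : Continuous (h : ℝ → ℝ))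
    (hmass : h.measure (Set.Ici (0:ℝ)) = 2)
    (hmass1 : h.measure (Set.Icc (0:ℝ) 1) = 1)
    (hsym : ∀ x ∈ Set.Icc (0:ℝ) 1, h x = 1 - h (1 - x))
    (heq1 : ∀ x ≥ (0:ℝ), h x = 2 * h (x / (x + 1)))
    (heq2 : ∀ x > (0:ℝ), h x + h (1 / x) = 2)
    (fc Fc : ℝ → ℝ)
    (hfc : ∀ t : ℝ, fc t = ∫ x in Set.Icc (0:ℝ) 1, Real.cos (x * t) ∂h.measure)
    (hFc : ∀ t : ℝ, Fc t = ∫ x in Set.Ici (0:ℝ), Real.cos (x * t) ∂h.measure) :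
    ∀ t : ℝ, Fc t = (2 / (5 - 4 * Real.cos t)) * fc t := by
  intro t
  set μ := h.measure with hμ
  have hmono : Monotone (h : ℝ → ℝ) := h.mono
  have h0 : h 0 = 0 := by
    have := heq1 0 le_rfl
    norm_num at this
    linarith
  have hleft : ∀ a : ℝ, Function.leftLim (h : ℝ → ℝ) a = h a := by
    intro a
    exact leftLim_eq_of_tendsto
      ((hcont.tendsto a).mono_left nhdsWithin_le_nhds)
  have hatom : ∀ a : ℝ, μ {a} = 0 := by
    intro a
    rw [hμ, h.measure_singleton, hleft a, sub_self, ENNReal.ofReal_zero]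
  haveI : NullSingletonClass μ := ⟨hatom⟩
  have h1 : h 1 = 1 := by
    have := hmass1
    rw [hμ] at this
    rw [h.measure_Icc, hleft 0, h0, sub_zero] at this
    have h2 := ENNReal.ofReal_eq_one.mp this
    exact h2
  -- the shift relation h(x+1) = 1 + h(x)/2 for x ≥ 0
  have hshift : ∀ x : ℝ, 0 ≤ x → h (x + 1) = 1 + h x / 2 := by
    intro x hx
    rcases eq_or_lt_of_le hx with hx0 | hx0
    · rw [← hx0]; simp [h0, h1]
    · have hx1 : (0:ℝ) < x + 1 := by linarith
      have harg : (1/x) / ((1/x) + 1) = 1 / (x + 1) := by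
        field_simp
        ring
      have e1 : h (1/x) = 2 * h (1/(x+1)) := by
        have := heq1 (1/x) (by positivity)
        rwa [harg] at this
      have e2 := heq2 x hx0
      have e3 := heq2 (x+1) hx1
      linarith
  have half : ∀ c : ℝ, ENNReal.ofReal (c/2) = 2⁻¹ * ENNReal.ofReal c := by
    intro c
    rcases le_or_gt c 0 with hc | hc
    · rw [ENNReal.ofReal_of_nonpos (by linarith), ENNReal.ofReal_of_nonpos hc, mul_zero]
    · rw [ENNReal.ofReal_div_of_pos (by norm_num), ENNReal.div_eq_inv_mul]
      norm_num
  -- key measure identity I : μ on (1, ∞) is half of μ on (0,∞) shifted by 1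
  have key1 : μ.restrict (Ioi 1) =
      (2⁻¹ : ENNReal) • Measure.map (fun x => x + 1) (μ.restrict (Ioi 0)) := by
    haveI : IsFiniteMeasure (μ.restrict (Ioi 1)) := by
      refine ⟨?_⟩
      rw [Measure.restrict_apply_univ]
      refine lt_of_le_of_lt (measure_mono (show Ioi (1:ℝ) ⊆ Ici 0 from
        fun x hx => mem_Ici.mpr (le_of_lt (lt_trans one_pos hx)))) ?_
      rw [hmass]; exact ENNReal.ofNat_lt_top
    refine Measure.ext_of_Ioc _ _ fun a b hab => ?_
    rw [Measure.restrict_apply measurableSet_Ioc, Measure.smul_apply, smul_eq_mul,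
      Measure.map_apply (measurable_add_const (1:ℝ)) measurableSet_Ioc]
    have hpre : (fun x => x + 1) ⁻¹' Ioc a b = Ioc (a - 1) (b - 1) :=
      preimage_add_const_Ioc 1 a b
    rw [hpre, Measure.restrict_apply measurableSet_Ioc, Ioc_inter_Ioi, Ioc_inter_Ioi,
      hμ, h.measure_Ioc, h.measure_Ioc]
    have hmax : (a - 1) ⊔ 0 = (a ⊔ 1) - 1 := by
      rcases le_total a 1 with hle | hle
      · rw [sup_eq_right.mpr (by linarith), sup_eq_right.mpr hle]; ring
      · rw [sup_eq_left.mpr (by linarith), sup_eq_left.mpr hle]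
    rcases le_total b (a ⊔ 1) with hble | hble
    · rw [ENNReal.ofReal_of_nonpos (by simpa [sub_nonpos] using hmono hble),
        ENNReal.ofReal_of_nonpos, mul_zero]
      simp only [sub_nonpos]
      apply hmono
      rw [hmax]; linarith
    · have h1le : (1:ℝ) ≤ a ⊔ 1 := le_sup_right
      have hb1 : h b = 1 + h (b - 1) / 2 := by
        have := hshift (b - 1) (by linarith)
        rwa [sub_add_cancel] at this
      have ha1 : h (a ⊔ 1) = 1 + h ((a ⊔ 1) - 1) / 2 := by
        have := hshift ((a ⊔ 1) - 1) (by linarith)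
        rwa [sub_add_cancel] at this
      rw [← half]
      congr 1
      rw [hb1, ha1, hmax]
      ring
  -- key measure identity II : symmetry of μ on [0,1] about 1/2
  have key2 : μ.restrict (Ioc 0 1) =
      Measure.map (fun x => 1 - x) (μ.restrict (Ico 0 1)) := by
    haveI : IsFiniteMeasure (μ.restrict (Ioc 0 1)) := by
      refine ⟨?_⟩
      rw [Measure.restrict_apply_univ]
      refine lt_of_le_of_lt (measure_mono Ioc_subset_Icc_self) ?_
      rw [hmass1]; exact ENNReal.one_lt_top
    refine Measure.ext_of_Ioc _ _ fun a b hab => ?_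
    have hmeas : Measurable (fun x : ℝ => 1 - x) := measurable_const.sub measurable_id
    rw [Measure.restrict_apply measurableSet_Ioc,
      Measure.map_apply hmeas measurableSet_Ioc]
    have hpre : (fun x : ℝ => 1 - x) ⁻¹' Ioc a b = Ico (1 - b) (1 - a) :=
      preimage_const_sub_Ioc 1 a b
    rw [hpre, Measure.restrict_apply measurableSet_Ico, Ioc_inter_Ioc, Ico_inter_Ico,
      hμ, h.measure_Ioc, h.measure_Ico, hleft, hleft]
    have e1 : (1 - b) ⊔ 0 = 1 - (b ⊓ 1) := by
      rcases le_total b 1 with hle | hle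
      · rw [inf_eq_left.mpr hle, sup_eq_left.mpr (by linarith)]
      · rw [inf_eq_right.mpr hle, sup_eq_right.mpr (by linarith)]; ring
    have e2 : (1 - a) ⊓ 1 = 1 - (a ⊔ 0) := by
      rcases le_total a 0 with hle | hle
      · rw [sup_eq_right.mpr hle, inf_eq_right.mpr (by linarith)]; ring
      · rw [sup_eq_left.mpr hle, inf_eq_left.mpr (by linarith)]
    rw [e1, e2]
    rcases le_total (b ⊓ 1) (a ⊔ 0) with hle | hle
    · rw [ENNReal.ofReal_of_nonpos (by simpa [sub_nonpos] using hmono hle),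
        ENNReal.ofReal_of_nonpos (by simpa [sub_nonpos] using hmono (by linarith))]
    · have hb01 : b ⊓ 1 ∈ Icc (0:ℝ) 1 := ⟨le_trans le_sup_right hle, inf_le_right⟩
      have ha01 : a ⊔ 0 ∈ Icc (0:ℝ) 1 := ⟨le_sup_right, le_trans hle inf_le_right⟩
      congr 1
      have s1 := hsym _ hb01
      have s2 := hsym _ ha01
      linarith
  -- finiteness and integrability
  have hfinIci : IsFiniteMeasure (μ.restrict (Ici 0)) := by
    refine ⟨?_⟩
    rw [Measure.restrict_apply_univ]
    show μ (Ici 0) < ⊤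
    rw [hmass]
    exact ENNReal.ofNat_lt_top
  have hint : ∀ (g : ℝ → ℝ), Continuous g → (∀ x, ‖g x‖ ≤ 1) →
      ∀ S : Set ℝ, S ⊆ Ici 0 → Integrable g (μ.restrict S) := by
    intro g hg hb S hS
    have h1 : Integrable g (μ.restrict (Ici 0)) :=
      Integrable.mono' (integrable_const 1) hg.aestronglyMeasurable (ae_of_all _ hb)
    exact h1.mono_measure (Measure.restrict_mono hS le_rfl)
  have hcos : Continuous (fun x : ℝ => Real.cos (x * t)) :=
    Real.continuous_cos.comp (continuous_id.mul continuous_const)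
  have hsin : Continuous (fun x : ℝ => Real.sin (x * t)) :=
    Real.continuous_sin.comp (continuous_id.mul continuous_const)
  have hbcos : ∀ x : ℝ, ‖Real.cos (x * t)‖ ≤ 1 := fun x => by
    rw [Real.norm_eq_abs]; exact Real.abs_cos_le_one _
  have hbsin : ∀ x : ℝ, ‖Real.sin (x * t)‖ ≤ 1 := fun x => by
    rw [Real.norm_eq_abs]; exact Real.abs_sin_le_one _
  -- notation
  set A := ∫ x in Ioi (0:ℝ), Real.cos (x * t) ∂μ with hA
  set B := ∫ x in Ioi (0:ℝ), Real.sin (x * t) ∂μ with hB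
  set a := ∫ x in Ioc (0:ℝ) 1, Real.cos (x * t) ∂μ with ha
  set b := ∫ x in Ioc (0:ℝ) 1, Real.sin (x * t) ∂μ with hb
  have hsub01 : Ioc (0:ℝ) 1 ⊆ Ici 0 := Ioc_subset_Icc_self.trans Icc_subset_Ici_self
  have hsub01' : Ico (0:ℝ) 1 ⊆ Ici 0 := Ico_subset_Icc_self.trans Icc_subset_Ici_self
  have hsub1 : Ioi (1:ℝ) ⊆ Ici 0 := fun x hx => mem_Ici.mpr (le_of_lt (lt_trans one_pos hx))
  have hsub0 : Ioi (0:ℝ) ⊆ Ici 0 := Ioi_subset_Ici_self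
  -- integral transfer lemma from key1
  have map1 : ∀ g : ℝ → ℝ, Continuous g →
      (∫ x in Ioi (1:ℝ), g x ∂μ) = (1/2) * ∫ x in Ioi (0:ℝ), g (x + 1) ∂μ := by
    intro g hg
    calc (∫ x in Ioi (1:ℝ), g x ∂μ)
        = ∫ x, g x ∂((2⁻¹ : ENNReal) • Measure.map (fun x => x + 1) (μ.restrict (Ioi 0))) := by
          rw [← key1]
      _ = (2⁻¹ : ENNReal).toReal • ∫ x, g x ∂(Measure.map (fun x => x + 1) (μ.restrict (Ioi 0))) :=
          integral_smul_measure _ _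
      _ = (1/2) * ∫ x in Ioi (0:ℝ), g (x + 1) ∂μ := by
          rw [integral_map (measurable_add_const (1:ℝ)).aemeasurable hg.aestronglyMeasurable]
          norm_num
  have I1c : (∫ x in Ioi (1:ℝ), Real.cos (x * t) ∂μ)
      = (1/2) * (Real.cos t * A - Real.sin t * B) := by
    have e := map1 (fun x => Real.cos (x * t)) hcos
    rw [e]
    have e2 : (∫ x in Ioi (0:ℝ), Real.cos ((x + 1) * t) ∂μ)
        = ∫ x in Ioi (0:ℝ), (Real.cos t * Real.cos (x * t) - Real.sin t * Real.sin (x * t)) ∂μ := by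
      apply integral_congr_ae
      filter_upwards with x
      rw [show (x + 1) * t = x * t + t by ring, Real.cos_add]
      ring
    rw [e2, integral_sub ((hint _ hcos hbcos _ hsub0).const_mul _)
      ((hint _ hsin hbsin _ hsub0).const_mul _), integral_const_mul, integral_const_mul,
      ← hA, ← hB]
  have I1s : (∫ x in Ioi (1:ℝ), Real.sin (x * t) ∂μ)
      = (1/2) * (Real.sin t * A + Real.cos t * B) := by
    have e := map1 (fun x => Real.sin (x * t)) hsin
    rw [e]
    have e2 : (∫ x in Ioi (0:ℝ), Real.sin ((x + 1) * t) ∂μ)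
        = ∫ x in Ioi (0:ℝ), (Real.sin t * Real.cos (x * t) + Real.cos t * Real.sin (x * t)) ∂μ := by
      apply integral_congr_ae
      filter_upwards with x
      rw [show (x + 1) * t = x * t + t by ring, Real.sin_add]
      ring
    rw [e2, integral_add ((hint _ hcos hbcos _ hsub0).const_mul _)
      ((hint _ hsin hbsin _ hsub0).const_mul _), integral_const_mul, integral_const_mul,
      ← hA, ← hB]
  -- split the integral over (0,∞)
  have hsplit : ∀ g : ℝ → ℝ, Continuous g → (∀ x, ‖g x‖ ≤ 1) →
      (∫ x in Ioi (0:ℝ), g x ∂μ)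
        = (∫ x in Ioc (0:ℝ) 1, g x ∂μ) + ∫ x in Ioi (1:ℝ), g x ∂μ := by
    intro g hg hbd
    rw [← Ioc_union_Ioi_eq_Ioi (by norm_num : (0:ℝ) ≤ 1)]
    exact setIntegral_union Ioc_disjoint_Ioi_same measurableSet_Ioi
      (hint g hg hbd _ hsub01) (hint g hg hbd _ hsub1)
  have eqA : A = a + (1/2) * (Real.cos t * A - Real.sin t * B) := by
    have e := hsplit (fun x => Real.cos (x * t)) hcos hbcos
    rw [← hA, ← ha, I1c] at e
    exact e
  have eqB : B = b + (1/2) * (Real.sin t * A + Real.cos t * B) := by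
    have e := hsplit (fun x => Real.sin (x * t)) hsin hbsin
    rw [← hB, ← hb, I1s] at e
    exact e
  -- equation (d) from the symmetry
  have hIcoIoc : ∀ g : ℝ → ℝ,
      (∫ x in Ico (0:ℝ) 1, g x ∂μ) = ∫ x in Ioc (0:ℝ) 1, g x ∂μ := by
    intro g
    rw [← integral_Icc_eq_integral_Ico, integral_Icc_eq_integral_Ioc]
  have eqd : a = Real.cos t * a + Real.sin t * b := by
    have hmeas : Measurable (fun x : ℝ => 1 - x) := measurable_const.sub measurable_id
    have e : (∫ x in Ioc (0:ℝ) 1, Real.cos (x * t) ∂μ)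
        = ∫ x in Ico (0:ℝ) 1, Real.cos ((1 - x) * t) ∂μ := by
      calc (∫ x in Ioc (0:ℝ) 1, Real.cos (x * t) ∂μ)
          = ∫ x, Real.cos (x * t) ∂(Measure.map (fun x => 1 - x) (μ.restrict (Ico 0 1))) := by
            rw [← key2]
        _ = ∫ x in Ico (0:ℝ) 1, Real.cos ((1 - x) * t) ∂μ := by
            rw [integral_map hmeas.aemeasurable hcos.aestronglyMeasurable]
    have e2 : (∫ x in Ico (0:ℝ) 1, Real.cos ((1 - x) * t) ∂μ)
        = ∫ x in Ico (0:ℝ) 1, (Real.cos t * Real.cos (x * t) + Real.sin t * Real.sin (x * t)) ∂μ := by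
      apply integral_congr_ae
      filter_upwards with x
      rw [show (1 - x) * t = t - x * t by ring, Real.cos_sub]
    rw [e2, integral_add ((hint _ hcos hbcos _ hsub01').const_mul _)
      ((hint _ hsin hbsin _ hsub01').const_mul _), integral_const_mul, integral_const_mul,
      hIcoIoc, hIcoIoc, ← ha, ← hb] at e
    exact e
  -- rewrite the goal
  have hFcA : Fc t = A := by
    rw [hFc t, hA, integral_Ici_eq_integral_Ioi]
  have hfca : fc t = a := by
    rw [hfc t, ha, integral_Icc_eq_integral_Ioc]
  have hD : (0:ℝ) < 5 - 4 * Real.cos t := by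
    nlinarith [Real.neg_one_le_cos t, Real.cos_le_one t]
  rw [hFcA, hfca, div_mul_eq_mul_div, eq_div_iff (ne_of_gt hD),
    mul_comm A (5 - 4 * Real.cos t)]
  linear_combination 2 * (2 - Real.cos t) * eqA - 2 * Real.sin t * eqB + 2 * eqd
    - A * (Real.sin_sq_add_cos_sq t)
end

section
/- Under the same hypotheses, the sine transforms satisfy F_s(t) = (6/(5 - 4cos t))·f_s(t), where F_s(t) = ∫₀^∞ sin(xt) dh(x) and f_s(t) = ∫₀¹ sin(xt) dh(x). -/
open MeasureTheory Set Filter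

/-- Under the Minkowski-type hypotheses on `h`, the sine Fourier–Stieltjes transforms
satisfy `F_s t = (6/(5 - 4 cos t)) f_s t`. -/
theorem stmt5 (h : StieltjesFunction ℝ) (hcont : Continuous (h : ℝ → ℝ))
    (hmass : h.measure (Set.Ici (0:ℝ)) = 2)
    (hmass1 : h.measure (Set.Icc (0:ℝ) 1) = 1)
    (hsym : ∀ x ∈ Set.Icc (0:ℝ) 1, h x = 1 - h (1 - x))
    (heq1 : ∀ x ≥ (0:ℝ), h x = 2 * h (x / (x + 1)))
    (heq2 : ∀ x > (0:ℝ), h x + h (1 / x) = 2)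
    (fs Fs : ℝ → ℝ)
    (hfs : ∀ t : ℝ, fs t = ∫ x in Set.Icc (0:ℝ) 1, Real.sin (x * t) ∂h.measure)
    (hFs : ∀ t : ℝ, Fs t = ∫ x in Set.Ici (0:ℝ), Real.sin (x * t) ∂h.measure) :
    ∀ t : ℝ, Fs t = (6 / (5 - 4 * Real.cos t)) * fs t := by
  -- basic values of h
  have h0 : h 0 = 0 := by have := heq1 0 le_rfl; norm_num at this; linarith
  have h1 : h 1 = 1 := by have := hsym 0 (by norm_num); norm_num at this; linarith
  have hstep : ∀ x : ℝ, 0 ≤ x → h (x + 1) = 1 + h x / 2 := by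
    intro x hx
    rcases eq_or_lt_of_le hx with rfl | hx
    · norm_num [h0, h1]
    · have e1 := heq2 x hx
      have e2 := heq1 (1/x) (by positivity)
      have e3 := heq2 (x+1) (by linarith)
      have hx0 : x ≠ 0 := ne_of_gt hx
      have hx1 : x + 1 ≠ 0 := by linarith
      have key : (1/x) / (1/x + 1) = 1 / (x + 1) := by field_simp; ring
      rw [key] at e2
      linarith
  -- left limits and measure of intervals
  have hll : ∀ x : ℝ, Function.leftLim (h : ℝ → ℝ) x = h x := fun x =>
    (h.mono.continuousWithinAt_Iio_iff_leftLim_eq).1 hcont.continuousAt.continuousWithinAt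
  have hIcc : ∀ a b : ℝ, h.measure (Set.Icc a b) = ENNReal.ofReal (h b - h a) := by
    intro a b; rw [h.measure_Icc, hll]
  haveI hatoms : NullSingletonClass h.measure := by
    constructor
    intro x
    rw [h.measure_singleton, hll]
    simp
  haveI hfin : IsFiniteMeasure (h.measure.restrict (Set.Ici (0:ℝ))) := by
    constructor
    rw [Measure.restrict_apply_univ, hmass]
    norm_num
  haveI hfin1 : IsFiniteMeasure (h.measure.restrict (Set.Icc (0:ℝ) 1)) := by
    constructor
    rw [Measure.restrict_apply_univ, hmass1]
    norm_num
  -- the two pushforward identities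
  have hmap1 : Measure.map (fun x => x + 1) (h.measure.restrict (Set.Ici 0)) =
      (2 : ENNReal) • h.measure.restrict (Set.Ici 1) := by
    refine Measure.ext_of_Iic _ _ (fun a => ?_)
    rw [Measure.map_apply (measurable_add_const 1) measurableSet_Iic]
    have hpre : (fun x => x + 1) ⁻¹' Set.Iic a = Set.Iic (a - 1) := by
      ext x; simp only [Set.mem_preimage, Set.mem_Iic]; constructor <;> intro <;> linarith
    rw [hpre, Measure.restrict_apply measurableSet_Iic, Measure.smul_apply,
      Measure.restrict_apply measurableSet_Iic]
    have h2 : Set.Iic (a-1) ∩ Set.Ici (0:ℝ) = Set.Icc 0 (a-1) := by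
      ext x; simp [Set.mem_Icc]; tauto
    have h3 : Set.Iic a ∩ Set.Ici (1:ℝ) = Set.Icc 1 a := by
      ext x; simp [Set.mem_Icc]; tauto
    rw [h2, h3, hIcc, hIcc, h0, h1]
    rcases le_or_gt 1 a with ha | ha
    · have hs := hstep (a-1) (by linarith)
      rw [sub_add_cancel] at hs
      have h2' : (2:ENNReal) = ENNReal.ofReal 2 := by norm_num
      rw [smul_eq_mul, h2', ← ENNReal.ofReal_mul (by norm_num)]
      have e : (h : ℝ → ℝ) (a-1) - 0 = 2 * ((h : ℝ → ℝ) a - 1) := by linarith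
      rw [e]
    · have e1 : h (a-1) ≤ 0 := by rw [← h0]; exact h.mono (by linarith)
      have e2 : h a ≤ 1 := by rw [← h1]; exact h.mono (by linarith)
      rw [ENNReal.ofReal_eq_zero.2 (by linarith), ENNReal.ofReal_eq_zero.2 (by linarith)]
      simp
  have hmap2 : Measure.map (fun x => 1 - x) (h.measure.restrict (Set.Icc 0 1)) =
      h.measure.restrict (Set.Icc 0 1) := by
    refine Measure.ext_of_Iic _ _ (fun a => ?_)
    rw [Measure.map_apply (show Measurable fun x : ℝ => 1 - x by fun_prop) measurableSet_Iic]
    have hpre : (fun x => (1:ℝ) - x) ⁻¹' Set.Iic a = Set.Ici (1 - a) := by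
      ext x; simp only [Set.mem_preimage, Set.mem_Iic, Set.mem_Ici]
      constructor <;> intro <;> linarith
    rw [hpre, Measure.restrict_apply measurableSet_Ici, Measure.restrict_apply measurableSet_Iic]
    rcases lt_or_ge a 0 with ha | ha
    · have e1 : Set.Ici (1-a) ∩ Set.Icc (0:ℝ) 1 = ∅ := by
        ext x
        simp only [Set.mem_inter_iff, Set.mem_Ici, Set.mem_Icc, Set.mem_empty_iff_false, iff_false]
        rintro ⟨h1, h2, h3⟩; linarith
      have e2 : Set.Iic a ∩ Set.Icc (0:ℝ) 1 = ∅ := by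
        ext x
        simp only [Set.mem_inter_iff, Set.mem_Iic, Set.mem_Icc, Set.mem_empty_iff_false, iff_false]
        rintro ⟨h1, h2, h3⟩; linarith
      rw [e1, e2]
    rcases le_or_gt a 1 with ha1 | ha1
    · have e1 : Set.Ici (1-a) ∩ Set.Icc (0:ℝ) 1 = Set.Icc (1-a) 1 := by
        ext x; simp only [Set.mem_inter_iff, Set.mem_Ici, Set.mem_Icc]
        constructor
        · rintro ⟨h1, h2, h3⟩; exact ⟨h1, h3⟩
        · rintro ⟨h1, h2⟩; exact ⟨h1, by linarith, h2⟩
      have e2 : Set.Iic a ∩ Set.Icc (0:ℝ) 1 = Set.Icc 0 a := by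
        ext x; simp only [Set.mem_inter_iff, Set.mem_Iic, Set.mem_Icc]
        constructor
        · rintro ⟨h1, h2, h3⟩; exact ⟨h2, h1⟩
        · rintro ⟨h1, h2⟩; exact ⟨h2, h1, by linarith⟩
      rw [e1, e2, hIcc, hIcc, h0, h1]
      have := hsym a ⟨ha, ha1⟩
      congr 1
      linarith
    · have e1 : Set.Ici (1-a) ∩ Set.Icc (0:ℝ) 1 = Set.Icc 0 1 := by
        ext x; simp only [Set.mem_inter_iff, Set.mem_Ici, Set.mem_Icc]
        constructor
        · rintro ⟨h1, h2, h3⟩; exact ⟨h2, h3⟩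
        · rintro ⟨h1, h2⟩; exact ⟨by linarith, h1, h2⟩
      have e2 : Set.Iic a ∩ Set.Icc (0:ℝ) 1 = Set.Icc 0 1 := by
        ext x; simp only [Set.mem_inter_iff, Set.mem_Iic, Set.mem_Icc]
        constructor
        · rintro ⟨h1, h2, h3⟩; exact ⟨h2, h3⟩
        · rintro ⟨h1, h2⟩; exact ⟨by linarith, h1, h2⟩
      rw [e1, e2]
  -- integrability of bounded continuous functions
  have hint : ∀ (g : ℝ → ℝ), Continuous g → (∀ x, |g x| ≤ 1) →
      ∀ s : Set ℝ, s ⊆ Set.Ici 0 → IntegrableOn g s h.measure := by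
    intro g hg hb s hs
    have hI : IntegrableOn g (Set.Ici 0) h.measure :=
      (integrable_const (1:ℝ)).mono' hg.aestronglyMeasurable
        (ae_of_all _ fun x => by simpa using hb x)
    exact hI.mono_set hs
  -- splitting lemma
  have hsplit : ∀ (g : ℝ → ℝ), Continuous g → (∀ x, |g x| ≤ 1) →
      ∫ x in Set.Ici 0, g x ∂h.measure =
        (∫ x in Set.Icc (0:ℝ) 1, g x ∂h.measure) + ∫ x in Set.Ici 1, g x ∂h.measure := by
    intro g hg hb
    have hu : Set.Icc (0:ℝ) 1 ∪ Set.Ioi 1 = Set.Ici 0 := Set.Icc_union_Ioi_eq_Ici (by norm_num)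
    have hd : Disjoint (Set.Icc (0:ℝ) 1) (Set.Ioi 1) :=
      Set.disjoint_left.mpr fun x hx hx' => absurd hx.2 (not_le.mpr hx')
    rw [← hu, setIntegral_union hd measurableSet_Ioi
      (hint g hg hb _ (fun x hx => hx.1)) (hint g hg hb _ (fun x hx => by
        have : (1:ℝ) < x := hx
        exact le_of_lt (lt_of_le_of_lt (by norm_num) this)))]
    congr 1
    exact setIntegral_congr_set Ioi_ae_eq_Ici
  -- translation lemma
  have htrans : ∀ (g : ℝ → ℝ), Continuous g →
      2 * ∫ x in Set.Ici 1, g x ∂h.measure = ∫ x in Set.Ici 0, g (x + 1) ∂h.measure := by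
    intro g hg
    have him := integral_map (μ := h.measure.restrict (Set.Ici 0))
      (measurable_add_const 1).aemeasurable hg.aestronglyMeasurable
    rw [hmap1, integral_smul_measure] at him
    simpa using him
  -- reflection lemma
  have hrefl : ∀ (g : ℝ → ℝ), Continuous g →
      ∫ x in Set.Icc (0:ℝ) 1, g x ∂h.measure =
        ∫ x in Set.Icc (0:ℝ) 1, g (1 - x) ∂h.measure := by
    intro g hg
    have him := integral_map (μ := h.measure.restrict (Set.Icc 0 1))
      (show Measurable fun x : ℝ => 1 - x by fun_prop).aemeasurable
      hg.aestronglyMeasurable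
    rw [hmap2] at him
    exact him
  -- main computation at fixed t
  intro t
  set c := Real.cos t with hc
  set s := Real.sin t with hs
  set Fc : ℝ := ∫ x in Set.Ici (0:ℝ), Real.cos (x * t) ∂h.measure with hFc
  set fc : ℝ := ∫ x in Set.Icc (0:ℝ) 1, Real.cos (x * t) ∂h.measure with hfc
  have bsin : ∀ x : ℝ, |Real.sin (x * t)| ≤ 1 := fun x => Real.abs_sin_le_one _
  have bcos : ∀ x : ℝ, |Real.cos (x * t)| ≤ 1 := fun x => Real.abs_cos_le_one _
  have csin : Continuous fun x : ℝ => Real.sin (x * t) := by fun_prop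
  have ccos : Continuous fun x : ℝ => Real.cos (x * t) := by fun_prop
  have isin : IntegrableOn (fun x => Real.sin (x * t)) (Set.Ici 0) h.measure :=
    hint _ csin bsin _ le_rfl
  have icos : IntegrableOn (fun x => Real.cos (x * t)) (Set.Ici 0) h.measure :=
    hint _ ccos bcos _ le_rfl
  -- E1 : sine relation from translation
  have expand_sin : ∀ x : ℝ, Real.sin ((x + 1) * t)
      = Real.sin (x * t) * c + Real.cos (x * t) * s := by
    intro x
    rw [show (x + 1) * t = x * t + t by ring, Real.sin_add]
  have expand_cos : ∀ x : ℝ, Real.cos ((x + 1) * t)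
      = Real.cos (x * t) * c - Real.sin (x * t) * s := by
    intro x
    rw [show (x + 1) * t = x * t + t by ring, Real.cos_add]
  have trans_sin : 2 * ∫ x in Set.Ici 1, Real.sin (x * t) ∂h.measure
      = (∫ x in Set.Ici (0:ℝ), Real.sin (x * t) ∂h.measure) * c + Fc * s := by
    have T := htrans (fun x => Real.sin (x * t)) csin
    rw [T]
    have e : ∫ x in Set.Ici (0:ℝ), Real.sin ((x + 1) * t) ∂h.measure
        = ∫ x in Set.Ici (0:ℝ), (Real.sin (x * t) * c + Real.cos (x * t) * s) ∂h.measure := by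
      refine setIntegral_congr_fun measurableSet_Ici fun x _ => expand_sin x
    rw [e, integral_add (isin.mul_const c) (icos.mul_const s),
      integral_mul_const, integral_mul_const, hFc]
  have trans_cos : 2 * ∫ x in Set.Ici 1, Real.cos (x * t) ∂h.measure
      = Fc * c - (∫ x in Set.Ici (0:ℝ), Real.sin (x * t) ∂h.measure) * s := by
    have T := htrans (fun x => Real.cos (x * t)) ccos
    rw [T]
    have e : ∫ x in Set.Ici (0:ℝ), Real.cos ((x + 1) * t) ∂h.measure
        = ∫ x in Set.Ici (0:ℝ), (Real.cos (x * t) * c - Real.sin (x * t) * s) ∂h.measure := by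
      refine setIntegral_congr_fun measurableSet_Ici fun x _ => expand_cos x
    rw [e, integral_sub (icos.mul_const c) (isin.mul_const s),
      integral_mul_const, integral_mul_const, hFc]
  have split_sin := hsplit (fun x => Real.sin (x * t)) csin bsin
  have split_cos := hsplit (fun x => Real.cos (x * t)) ccos bcos
  -- E3 : reflection relation
  have refl_sin : fs t = s * fc - c * fs t := by
    have e0 := hrefl (fun x => Real.sin (x * t)) csin
    have e : ∫ x in Set.Icc (0:ℝ) 1, Real.sin ((1 - x) * t) ∂h.measure
        = ∫ x in Set.Icc (0:ℝ) 1, (s * Real.cos (x * t) - c * Real.sin (x * t)) ∂h.measure := by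
      refine setIntegral_congr_fun measurableSet_Icc fun x _ => ?_
      rw [show (1 - x) * t = t - x * t by ring, Real.sin_sub]
    have isin1 : IntegrableOn (fun x => Real.sin (x * t)) (Set.Icc 0 1) h.measure :=
      hint _ csin bsin _ (fun x hx => hx.1)
    have icos1 : IntegrableOn (fun x => Real.cos (x * t)) (Set.Icc 0 1) h.measure :=
      hint _ ccos bcos _ (fun x hx => hx.1)
    rw [e, integral_sub (icos1.const_mul s) (isin1.const_mul c),
      integral_const_mul, integral_const_mul] at e0
    rw [hfs, hfc]
    exact e0
  -- assemble the linear system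
  have E1 : 2 * (Fs t - fs t) = c * Fs t + s * Fc := by
    rw [hFs, hfs]
    linarith [split_sin, trans_sin]
  have E2 : 2 * (Fc - fc) = c * Fc - s * Fs t := by
    rw [hFs]
    linarith [split_cos, trans_cos, hFc, hfc]
  -- final algebra
  have hpyth : s ^ 2 + c ^ 2 = 1 := by
    rw [hs, hc]; exact Real.sin_sq_add_cos_sq t
  have hD : (5 : ℝ) - 4 * c ≥ 1 := by
    have := Real.cos_le_one t
    rw [hc]; linarith
  have hDne : (5 : ℝ) - 4 * c ≠ 0 := by linarith
  have key : (5 - 4 * c) * Fs t = 6 * fs t := by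
    linear_combination (2 - c) * E1 + s * E2 - 2 * refl_sin - Fs t * hpyth
  rw [hc] at hDne key
  field_simp
  linarith [key]
end

section
/- Under the hypotheses on h giving the relations F_c(t) = 2 f_c(t)/(5 - 4cos t) and F_s(t) = 6 f_s(t)/(5 - 4cos t), one has for all real t: ∫₁^∞ cos(xt) dh(x) = ((1 - 8sin²(t/2))/(1 + 8sin²(t/2)))·∫₀¹ cos(xt) dh(x), and ∫₁^∞ sin(xt) dh(x) = ((5 - 8sin²(t/2))/(1 + 8sin²(t/2)))·∫₀¹ sin(xt) dh(x). -/
open MeasureTheory Set Filter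
open scoped ENNReal

private lemma mink_shift (h : StieltjesFunction ℝ)
    (heq1 : ∀ x ≥ (0:ℝ), h x = 2 * h (x / (x + 1)))
    (heq2 : ∀ x > (0:ℝ), h x + h (1 / x) = 2) :
    ∀ x ≥ (0:ℝ), h (x + 1) = 1 + h x / 2 := by
  have h0 : h 0 = 0 := by have := heq1 0 le_rfl; norm_num at this; linarith
  have h1 : h 1 = 1 := by have := heq2 1 one_pos; norm_num at this; linarith
  intro x hx
  rcases eq_or_lt_of_le hx with rfl | hx
  · norm_num [h0, h1]
  · have hx1 : (0:ℝ) < x + 1 := by linarith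
    have e1 : h (x + 1) + h (1 / (x + 1)) = 2 := heq2 _ hx1
    have e2 : h (1/x) = 2 * h (1 / (x + 1)) := by
      have := heq1 (1/x) (by positivity)
      rwa [show (1/x) / (1/x + 1) = 1 / (x + 1) by field_simp; ring] at this
    have e3 : h x + h (1/x) = 2 := heq2 _ hx
    linarith

private lemma mink_shiftIoc (h : StieltjesFunction ℝ)
    (hmass : h.measure (Set.Ici (0:ℝ)) = 2)
    (h0 : h 0 = 0) (h1 : h 1 = 1)
    (hshift : ∀ x ≥ (0:ℝ), h (x + 1) = 1 + h x / 2) :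
    (h.measure.restrict (Ioc 0 1)).map (· + 1) = (2 : ℝ≥0∞) • h.measure.restrict (Ioc 1 2) := by
  have hmono : Monotone (h : ℝ → ℝ) := h.mono
  have ofReal_half : ∀ y : ℝ, ENNReal.ofReal y = 2 * ENNReal.ofReal (y / 2) := by
    intro y
    rw [show (2:ℝ≥0∞) = ENNReal.ofReal 2 by norm_num, ← ENNReal.ofReal_mul (by norm_num)]
    congr 1; ring
  have hfin : h.measure (Ioc (0:ℝ) 1) ≠ ⊤ := by
    refine ne_top_of_le_ne_top (by rw [hmass]; norm_num) (measure_mono ?_)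
    exact fun x hx => hx.1.le
  haveI : IsFiniteMeasure ((h.measure.restrict (Ioc 0 1)).map (· + 1)) := by
    constructor
    rw [Measure.map_apply (measurable_add_const 1) MeasurableSet.univ, preimage_univ,
      Measure.restrict_apply_univ]
    exact hfin.lt_top
  refine Measure.ext_of_Iic _ _ fun a => ?_
  rw [Measure.map_apply (measurable_add_const 1) measurableSet_Iic, preimage_add_const_Iic,
    Measure.smul_apply, Measure.restrict_apply measurableSet_Iic,
    Measure.restrict_apply measurableSet_Iic]
  have e1 : Iic (a - 1) ∩ Ioc 0 1 = Ioc 0 (min 1 (a-1)) := by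
    rw [inter_comm, Ioc_inter_Iic]
  have e2 : Iic a ∩ Ioc 1 2 = Ioc 1 (min 2 a) := by
    rw [inter_comm, Ioc_inter_Iic]
  rw [e1, e2, h.measure_Ioc, h.measure_Ioc, smul_eq_mul]
  rcases le_or_gt a 1 with ha | ha
  · rw [min_eq_right (by linarith), min_eq_right (by linarith)]
    rw [ENNReal.ofReal_of_nonpos (by have := hmono (show a - 1 ≤ 0 by linarith); linarith),
      ENNReal.ofReal_of_nonpos (by have := hmono (show a ≤ 1 by linarith); linarith), mul_zero]
  · have hm : min 2 a - 1 = min 1 (a - 1) := by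
      rcases le_total a 2 with h2 | h2
      · rw [min_eq_right h2, min_eq_right (by linarith)]
      · rw [min_eq_left h2, min_eq_left (by linarith)]; norm_num
    have hb1 : (1:ℝ) ≤ min 2 a := le_min (by norm_num) ha.le
    have hs := hshift (min 2 a - 1) (by linarith)
    rw [show min 2 a - 1 + 1 = min 2 a by ring] at hs
    rw [hs, hm, h0, h1]
    rw [ofReal_half (h (min 1 (a-1)) - 0)]
    ring_nf

private lemma mink_shiftIoi (h : StieltjesFunction ℝ)
    (hmass : h.measure (Set.Ici (0:ℝ)) = 2)
    (h1 : h 1 = 1)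
    (hshift : ∀ x ≥ (0:ℝ), h (x + 1) = 1 + h x / 2) :
    (h.measure.restrict (Ioi 1)).map (· + 1) = (2 : ℝ≥0∞) • h.measure.restrict (Ioi 2) := by
  have hmono : Monotone (h : ℝ → ℝ) := h.mono
  have ofReal_half : ∀ y : ℝ, ENNReal.ofReal y = 2 * ENNReal.ofReal (y / 2) := by
    intro y
    rw [show (2:ℝ≥0∞) = ENNReal.ofReal 2 by norm_num, ← ENNReal.ofReal_mul (by norm_num)]
    congr 1; ring
  have hfin : h.measure (Ioi (1:ℝ)) ≠ ⊤ := by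
    refine ne_top_of_le_ne_top (by rw [hmass]; norm_num) (measure_mono ?_)
    exact fun x hx => le_trans (by norm_num) (le_of_lt (show (1:ℝ) < x from hx))
  haveI : IsFiniteMeasure ((h.measure.restrict (Ioi 1)).map (· + 1)) := by
    constructor
    rw [Measure.map_apply (measurable_add_const 1) MeasurableSet.univ, preimage_univ,
      Measure.restrict_apply_univ]
    exact hfin.lt_top
  refine Measure.ext_of_Iic _ _ fun a => ?_
  rw [Measure.map_apply (measurable_add_const 1) measurableSet_Iic, preimage_add_const_Iic,
    Measure.smul_apply, Measure.restrict_apply measurableSet_Iic,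
    Measure.restrict_apply measurableSet_Iic]
  have e1 : Iic (a - 1) ∩ Ioi 1 = Ioc 1 (a - 1) := by
    rw [inter_comm, Ioi_inter_Iic]
  have e2 : Iic a ∩ Ioi 2 = Ioc 2 a := by
    rw [inter_comm, Ioi_inter_Iic]
  rw [e1, e2, h.measure_Ioc, h.measure_Ioc, smul_eq_mul]
  have h2 : h 2 = 3/2 := by have := hshift 1 (by norm_num); norm_num [h1] at this; linarith
  rcases le_or_gt a 1 with ha | ha
  · rw [ENNReal.ofReal_of_nonpos (by have := hmono (show a - 1 ≤ 1 by linarith); linarith),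
      ENNReal.ofReal_of_nonpos (by have := hmono (show a ≤ 2 by linarith); linarith), mul_zero]
  · have hs := hshift (a - 1) (by linarith)
    rw [show a - 1 + 1 = a by ring] at hs
    rw [hs, h1, h2, ofReal_half (h (a-1) - 1)]
    ring_nf

private lemma mink_symmIoc (h : StieltjesFunction ℝ)
    (hmass : h.measure (Set.Ici (0:ℝ)) = 2)
    (h0 : h 0 = 0) (h1 : h 1 = 1)
    (hsym : ∀ x ∈ Set.Icc (0:ℝ) 1, h x = 1 - h (1 - x))
    (hll : ∀ x : ℝ, Function.leftLim (h : ℝ → ℝ) x = h x) :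
    (h.measure.restrict (Ioc 0 1)).map (fun x => 1 - x) = h.measure.restrict (Ioc 0 1) := by
  have hmono : Monotone (h : ℝ → ℝ) := h.mono
  haveI : NullSingletonClass h.measure := by
    refine ⟨fun a => ?_⟩
    rw [h.measure_singleton, hll, sub_self, ENNReal.ofReal_zero]
  have hmeas : Measurable (fun x : ℝ => 1 - x) := measurable_const.sub measurable_id
  have hfin : h.measure (Ioc (0:ℝ) 1) ≠ ⊤ := by
    refine ne_top_of_le_ne_top (by rw [hmass]; norm_num) (measure_mono ?_)
    exact fun x hx => hx.1.le
  haveI : IsFiniteMeasure ((h.measure.restrict (Ioc 0 1)).map (fun x => 1 - x)) := by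
    constructor
    rw [Measure.map_apply hmeas MeasurableSet.univ, preimage_univ, Measure.restrict_apply_univ]
    exact hfin.lt_top
  refine Measure.ext_of_Iic _ _ fun a => ?_
  have hpre : (fun x : ℝ => 1 - x) ⁻¹' Iic a = Ici (1 - a) := by
    ext x; simp only [mem_preimage, mem_Iic, mem_Ici]; constructor <;> intro <;> linarith
  rw [Measure.map_apply hmeas measurableSet_Iic, hpre,
    Measure.restrict_apply measurableSet_Ici,
    Measure.restrict_apply measurableSet_Iic]
  have e0 : (Ici (1-a) ∩ Ioc 0 1 : Set ℝ) =ᵐ[h.measure] (Ioi (1-a) ∩ Ioc 0 1 : Set ℝ) := by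
    refine Filter.EventuallyEq.inter ?_ (Filter.EventuallyEq.refl _ _)
    exact (Ioi_ae_eq_Ici (μ := h.measure) (a := 1 - a)).symm
  rw [measure_congr e0]
  have e1 : (Ioi (1-a) ∩ Ioc 0 1 : Set ℝ) = Ioc (max (1-a) 0) 1 := by
    rw [inter_comm, Ioc_inter_Ioi, max_comm]
  have e2 : Iic a ∩ Ioc 0 1 = Ioc 0 (min 1 a) := by
    rw [inter_comm, Ioc_inter_Iic]
  rw [e1, e2, h.measure_Ioc, h.measure_Ioc, h0, h1]
  rcases le_or_gt a 0 with ha | ha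
  · rw [max_eq_left (by linarith), min_eq_right (by linarith : a ≤ (1:ℝ))]
    rw [ENNReal.ofReal_of_nonpos (by have := hmono (show (1:ℝ) ≤ 1 - a by linarith); linarith),
      ENNReal.ofReal_of_nonpos (by have := hmono (show a ≤ 0 by linarith); linarith)]
  · rcases le_or_gt a 1 with ha1 | ha1
    · rw [max_eq_left (by linarith), min_eq_right ha1]
      have := hsym (1 - a) (by constructor <;> [linarith; linarith])
      rw [this]; norm_num
    · rw [max_eq_right (by linarith), min_eq_left (by linarith), h0, h1]

/-- Under the Minkowski-type hypotheses on `h`, for all real `t`: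
`∫₁^∞ cos(xt) dh = ((1 - 8 sin²(t/2))/(1 + 8 sin²(t/2))) ∫₀¹ cos(xt) dh` and
`∫₁^∞ sin(xt) dh = ((5 - 8 sin²(t/2))/(1 + 8 sin²(t/2))) ∫₀¹ sin(xt) dh`. -/
theorem stmt9 (h : StieltjesFunction ℝ) (hcont : Continuous (h : ℝ → ℝ))
    (hmass : h.measure (Set.Ici (0:ℝ)) = 2)
    (hmass1 : h.measure (Set.Icc (0:ℝ) 1) = 1)
    (hsym : ∀ x ∈ Set.Icc (0:ℝ) 1, h x = 1 - h (1 - x))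
    (heq1 : ∀ x ≥ (0:ℝ), h x = 2 * h (x / (x + 1)))
    (heq2 : ∀ x > (0:ℝ), h x + h (1 / x) = 2) :
    ∀ t : ℝ,
      (∫ x in Set.Ioi (1:ℝ), Real.cos (x * t) ∂h.measure) =
        ((1 - 8 * Real.sin (t / 2) ^ 2) / (1 + 8 * Real.sin (t / 2) ^ 2)) *
          ∫ x in Set.Icc (0:ℝ) 1, Real.cos (x * t) ∂h.measure ∧
      (∫ x in Set.Ioi (1:ℝ), Real.sin (x * t) ∂h.measure) =
        ((5 - 8 * Real.sin (t / 2) ^ 2) / (1 + 8 * Real.sin (t / 2) ^ 2)) *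
          ∫ x in Set.Icc (0:ℝ) 1, Real.sin (x * t) ∂h.measure := by
  have h0 : h 0 = 0 := by have := heq1 0 le_rfl; norm_num at this; linarith
  have h1 : h 1 = 1 := by have := heq2 1 one_pos; norm_num at this; linarith
  have hshift := mink_shift h heq1 heq2
  have hll : ∀ x : ℝ, Function.leftLim (h : ℝ → ℝ) x = h x := fun x =>
    leftLim_eq_of_tendsto (hcont.continuousAt.continuousWithinAt)
  haveI : NullSingletonClass h.measure := by
    refine ⟨fun a => ?_⟩
    rw [h.measure_singleton, hll, sub_self, ENNReal.ofReal_zero]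
  have L1 := mink_shiftIoi h hmass h1 hshift
  have L2 := mink_shiftIoc h hmass h0 h1 hshift
  have L3 := mink_symmIoc h hmass h0 h1 hsym hll
  -- integrability
  have hfinS : ∀ S : Set ℝ, S ⊆ Ici 0 → h.measure S ≠ ⊤ := fun S hS =>
    ne_top_of_le_ne_top (by rw [hmass]; norm_num) (measure_mono hS)
  have hint : ∀ (g : ℝ → ℝ), Continuous g → (∀ x, ‖g x‖ ≤ 1) →
      ∀ S : Set ℝ, S ⊆ Ici 0 → IntegrableOn g S h.measure := by
    intro g hg hb S hS
    haveI : IsFiniteMeasure (h.measure.restrict S) :=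
      ⟨by rw [Measure.restrict_apply_univ]; exact (hfinS S hS).lt_top⟩
    exact Integrable.mono' (integrable_const 1) hg.aestronglyMeasurable (ae_of_all _ hb)
  intro t
  have ccos : Continuous (fun x : ℝ => Real.cos (x * t)) :=
    Real.continuous_cos.comp (continuous_id.mul continuous_const)
  have csin : Continuous (fun x : ℝ => Real.sin (x * t)) :=
    Real.continuous_sin.comp (continuous_id.mul continuous_const)
  have bcos : ∀ x : ℝ, ‖Real.cos (x * t)‖ ≤ 1 := fun x => by
    rw [Real.norm_eq_abs]; exact Real.abs_cos_le_one _
  have bsin : ∀ x : ℝ, ‖Real.sin (x * t)‖ ≤ 1 := fun x => by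
    rw [Real.norm_eq_abs]; exact Real.abs_sin_le_one _
  have s01 : (Ioc (0:ℝ) 1 : Set ℝ) ⊆ Ici 0 := fun x hx => hx.1.le
  have s12 : (Ioc (1:ℝ) 2 : Set ℝ) ⊆ Ici 0 := fun x hx => le_trans (by norm_num) hx.1.le
  have si1 : (Ioi (1:ℝ) : Set ℝ) ⊆ Ici 0 := fun x hx => le_trans (by norm_num) (le_of_lt (show (1:ℝ) < x from hx))
  have si2 : (Ioi (2:ℝ) : Set ℝ) ⊆ Ici 0 := fun x hx => le_trans (by norm_num) (le_of_lt (show (2:ℝ) < x from hx))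
  have iC01 := hint _ ccos bcos _ s01
  have iS01 := hint _ csin bsin _ s01
  have iC12 := hint _ ccos bcos _ s12
  have iS12 := hint _ csin bsin _ s12
  have iCi1 := hint _ ccos bcos _ si1
  have iSi1 := hint _ csin bsin _ si1
  have iCi2 := hint _ ccos bcos _ si2
  have iSi2 := hint _ csin bsin _ si2
  -- map-integral helper
  have mapint : ∀ (g : ℝ → ℝ), Continuous g → ∀ (S1 S2 : Set ℝ),
      (h.measure.restrict S1).map (· + 1) = (2:ℝ≥0∞) • h.measure.restrict S2 →
      ∫ x in S1, g (x + 1) ∂h.measure = 2 * ∫ x in S2, g x ∂h.measure := by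
    intro g hg S1 S2 hme
    rw [← integral_map (measurable_add_const 1).aemeasurable hg.aestronglyMeasurable, hme,
      integral_smul_measure]
    norm_num
  have symint : ∀ (g : ℝ → ℝ), Continuous g →
      ∫ x in Ioc (0:ℝ) 1, g (1 - x) ∂h.measure = ∫ x in Ioc (0:ℝ) 1, g x ∂h.measure := by
    intro g hg
    have e := integral_map (μ := h.measure.restrict (Ioc (0:ℝ) 1)) (φ := fun x : ℝ => 1 - x)
      ((measurable_const.sub measurable_id).aemeasurable) hg.aestronglyMeasurable
    rw [L3] at e
    exact e.symm
  set c := Real.cos t with hc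
  set s := Real.sin t with hs
  set A := ∫ x in Set.Ioi (1:ℝ), Real.cos (x * t) ∂h.measure with hA
  set B := ∫ x in Set.Ioi (1:ℝ), Real.sin (x * t) ∂h.measure with hB
  set C := ∫ x in Set.Ioc (0:ℝ) 1, Real.cos (x * t) ∂h.measure with hC
  set S := ∫ x in Set.Ioc (0:ℝ) 1, Real.sin (x * t) ∂h.measure with hS
  -- expansion lemmas
  have expC : ∀ x : ℝ, Real.cos ((x + 1) * t) = c * Real.cos (x * t) - s * Real.sin (x * t) := by
    intro x; rw [show (x + 1) * t = x * t + t by ring, Real.cos_add]; ring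
  have expS : ∀ x : ℝ, Real.sin ((x + 1) * t) = c * Real.sin (x * t) + s * Real.cos (x * t) := by
    intro x; rw [show (x + 1) * t = x * t + t by ring, Real.sin_add]; ring
  have expC' : ∀ x : ℝ, Real.cos ((1 - x) * t) = c * Real.cos (x * t) + s * Real.sin (x * t) := by
    intro x; rw [show (1 - x) * t = t - x * t by ring, Real.cos_sub]
  have expS' : ∀ x : ℝ, Real.sin ((1 - x) * t) = s * Real.cos (x * t) - c * Real.sin (x * t) := by
    intro x; rw [show (1 - x) * t = t - x * t by ring, Real.sin_sub]
  -- shift equations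
  have shC12 : 2 * ∫ x in Set.Ioc (1:ℝ) 2, Real.cos (x * t) ∂h.measure = c * C - s * S := by
    rw [← mapint _ ccos _ _ L2]
    simp only [expC]
    rw [integral_sub (iC01.const_mul c) (iS01.const_mul s), integral_const_mul, integral_const_mul]
  have shS12 : 2 * ∫ x in Set.Ioc (1:ℝ) 2, Real.sin (x * t) ∂h.measure = c * S + s * C := by
    rw [← mapint _ csin _ _ L2]
    simp only [expS]
    rw [integral_add (iS01.const_mul c) (iC01.const_mul s), integral_const_mul, integral_const_mul]
  have shCi : 2 * ∫ x in Set.Ioi (2:ℝ), Real.cos (x * t) ∂h.measure = c * A - s * B := by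
    rw [← mapint _ ccos _ _ L1]
    simp only [expC]
    rw [integral_sub (iCi1.const_mul c) (iSi1.const_mul s), integral_const_mul, integral_const_mul]
  have shSi : 2 * ∫ x in Set.Ioi (2:ℝ), Real.sin (x * t) ∂h.measure = c * B + s * A := by
    rw [← mapint _ csin _ _ L1]
    simp only [expS]
    rw [integral_add (iSi1.const_mul c) (iCi1.const_mul s), integral_const_mul, integral_const_mul]
  -- union equations
  have unC : A = (∫ x in Set.Ioc (1:ℝ) 2, Real.cos (x * t) ∂h.measure) +
      ∫ x in Set.Ioi (2:ℝ), Real.cos (x * t) ∂h.measure := by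
    rw [hA, ← Ioc_union_Ioi_eq_Ioi (by norm_num : (1:ℝ) ≤ 2),
      setIntegral_union (Ioc_disjoint_Ioi le_rfl) measurableSet_Ioi iC12 iCi2]
  have unS : B = (∫ x in Set.Ioc (1:ℝ) 2, Real.sin (x * t) ∂h.measure) +
      ∫ x in Set.Ioi (2:ℝ), Real.sin (x * t) ∂h.measure := by
    rw [hB, ← Ioc_union_Ioi_eq_Ioi (by norm_num : (1:ℝ) ≤ 2),
      setIntegral_union (Ioc_disjoint_Ioi le_rfl) measurableSet_Ioi iS12 iSi2]
  -- symmetry equations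
  have syC : C = c * C + s * S := by
    conv_lhs => rw [hC, ← symint _ ccos]
    simp only [expC']
    rw [integral_add (iC01.const_mul c) (iS01.const_mul s), integral_const_mul, integral_const_mul]
  have syS : S = s * C - c * S := by
    conv_lhs => rw [hS, ← symint _ csin]
    simp only [expS']
    rw [integral_sub (iC01.const_mul s) (iS01.const_mul c), integral_const_mul, integral_const_mul]
  -- linear system
  have hE1 : 2 * A = c * (A + C) - s * (B + S) := by linarith
  have hE2 : 2 * B = s * (A + C) + c * (B + S) := by linarith
  have pyth : s ^ 2 + c ^ 2 = 1 := Real.sin_sq_add_cos_sq t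
  have key1 : (5 - 4 * c) * A = (4 * c - 3) * C := by
    linear_combination (2 - c) * hE1 - s * hE2 + 2 * syC - (A + C) * pyth
  have key2 : (5 - 4 * c) * B = (4 * c + 1) * S := by
    linear_combination s * hE1 + (2 - c) * hE2 - 2 * syS - (B + S) * pyth
  have hs2 : Real.sin (t / 2) ^ 2 = (1 - c) / 2 := by
    have p1 := Real.sin_sq_add_cos_sq (t / 2)
    have p2 := Real.cos_two_mul (t / 2)
    rw [show 2 * (t / 2) = t by ring] at p2
    rw [hc]; linarith
  have hdpos : (0:ℝ) < 5 - 4 * c := by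
    have := Real.cos_le_one t; rw [← hc] at this; linarith
  rw [integral_Icc_eq_integral_Ioc, integral_Icc_eq_integral_Ioc, hs2]
  constructor
  · rw [div_mul_eq_mul_div, eq_div_iff (by linarith)]
    linear_combination key1
  · rw [div_mul_eq_mul_div, eq_div_iff (by linarith)]
    linear_combination key2
end

section
/- Under the hypotheses above, ∫₁^∞ cos(x t_m) dh(x) = 0 for every real t_m satisfying sin(t_m/2) = ±1/(2√2), and ∫₁^∞ sin(x t_k) dh(x) = 0 for every real t_k satisfying sin(t_k/2) = ±√(5/8). -/
open MeasureTheory Set Filter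

/-- Under the Minkowski-type hypotheses on `h`, `∫₁^∞ cos(x t) dh = 0` whenever
`sin(t/2) = ±1/(2√2)`, and `∫₁^∞ sin(x t) dh = 0` whenever `sin(t/2) = ±√(5/8)`. -/
theorem stmt10 (h : StieltjesFunction ℝ) (hcont : Continuous (h : ℝ → ℝ))
    (hmass : h.measure (Set.Ici (0:ℝ)) = 2)
    (hmass1 : h.measure (Set.Icc (0:ℝ) 1) = 1)
    (hsym : ∀ x ∈ Set.Icc (0:ℝ) 1, h x = 1 - h (1 - x))
    (heq1 : ∀ x ≥ (0:ℝ), h x = 2 * h (x / (x + 1)))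
    (heq2 : ∀ x > (0:ℝ), h x + h (1 / x) = 2) :
    (∀ t : ℝ, (Real.sin (t / 2) = 1 / (2 * Real.sqrt 2) ∨
        Real.sin (t / 2) = -(1 / (2 * Real.sqrt 2))) →
      (∫ x in Set.Ioi (1:ℝ), Real.cos (x * t) ∂h.measure) = 0) ∧
    (∀ t : ℝ, (Real.sin (t / 2) = Real.sqrt (5 / 8) ∨
        Real.sin (t / 2) = -Real.sqrt (5 / 8)) →
      (∫ x in Set.Ioi (1:ℝ), Real.sin (x * t) ∂h.measure) = 0) := by
  -- basic values of h
  have h0 : h 0 = 0 := by have := heq1 0 le_rfl; norm_num at this; linarith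
  have h1 : h 1 = 1 := by
    have := hsym 0 ⟨le_rfl, zero_le_one⟩; simp [h0] at this; linarith
  have hshift : ∀ x : ℝ, 0 ≤ x → h (x + 1) = 1 + h x / 2 := by
    intro x hx
    rcases eq_or_lt_of_le hx with rfl | hx'
    · norm_num [h0, h1]
    · have hx1 : (0:ℝ) < x + 1 := by linarith
      have e2 := heq2 (x + 1) hx1
      have e2' := heq2 x hx'
      have e1 := heq1 (1/x) (by positivity)
      have hx0 : x ≠ 0 := ne_of_gt hx'
      have hx10 : x + 1 ≠ 0 := ne_of_gt hx1
      have key : (1/x) / (1/x + 1) = 1/(x+1) := by field_simp; ring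
      rw [key] at e1
      linarith
  -- no atoms
  have hll : ∀ a : ℝ, Function.leftLim (h : ℝ → ℝ) a = h a := fun a =>
    leftLim_eq_of_tendsto (h := nhdsLT_neBot a)
      ((hcont.tendsto a).mono_left nhdsWithin_le_nhds)
  have hatom : ∀ a : ℝ, h.measure {a} = 0 := by
    intro a; rw [h.measure_singleton, hll]; simp
  have hIoc : ∀ a b : ℝ, h.measure (Ioc a b) = ENNReal.ofReal (h b - h a) :=
    fun a b => h.measure_Ioc a b
  have hIco : ∀ a b : ℝ, h.measure (Ico a b) = ENNReal.ofReal (h b - h a) := by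
    intro a b; rw [h.measure_Ico, hll, hll]
  -- finiteness
  have finS : ∀ S : Set ℝ, S ⊆ Ici 0 → h.measure S ≠ ⊤ := by
    intro S hS
    exact ((measure_mono hS).trans_lt (by rw [hmass]; exact ENNReal.ofNat_lt_top)).ne
  haveI fin01 : IsFiniteMeasure (h.measure.restrict (Ioo 0 1)) :=
    ⟨by rw [Measure.restrict_apply_univ]; exact lt_top_iff_ne_top.mpr (finS _ (fun x hx => le_of_lt hx.1))⟩
  haveI fin1 : IsFiniteMeasure (h.measure.restrict (Ioi 1)) :=
    ⟨by rw [Measure.restrict_apply_univ]; exact lt_top_iff_ne_top.mpr (finS _ (fun x hx => mem_Ici.mpr (le_of_lt (lt_trans zero_lt_one hx))))⟩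
  haveI fin0 : IsFiniteMeasure (h.measure.restrict (Ioi 0)) :=
    ⟨by rw [Measure.restrict_apply_univ]; exact lt_top_iff_ne_top.mpr (finS _ (fun x hx => mem_Ici.mpr (le_of_lt hx)))⟩
  -- reflection measure identity on (0,1)
  have refl_eq : Measure.map (fun x : ℝ => 1 - x) (h.measure.restrict (Ioo 0 1))
      = h.measure.restrict (Ioo 0 1) := by
    refine Measure.ext_of_Iic _ _ (fun x => ?_)
    rw [Measure.map_apply (measurable_id'.const_sub 1) measurableSet_Iic]
    have hpre : (fun x : ℝ => 1 - x) ⁻¹' (Iic x) = Ici (1 - x) := by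
      ext y; simp only [mem_preimage, mem_Iic, mem_Ici]; constructor <;> intro <;> linarith
    rw [hpre, Measure.restrict_apply measurableSet_Ici,
      Measure.restrict_apply measurableSet_Iic]
    rcases le_or_gt x 0 with hx | hx
    · have e1 : Ici (1 - x) ∩ Ioo 0 1 = ∅ := by
        ext y; simp only [mem_inter_iff, mem_Ici, mem_Ioo, mem_empty_iff_false, iff_false]
        rintro ⟨h1, h2, h3⟩; linarith
      have e2 : Iic x ∩ Ioo 0 1 = ∅ := by
        ext y; simp only [mem_inter_iff, mem_Iic, mem_Ioo, mem_empty_iff_false, iff_false]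
        rintro ⟨h1, h2, h3⟩; linarith
      rw [e1, e2]
    rcases lt_or_ge x 1 with hx1 | hx1
    · have e1 : Ici (1 - x) ∩ Ioo 0 1 = Ico (1 - x) 1 := by
        ext y; simp only [mem_inter_iff, mem_Ici, mem_Ioo, mem_Ico]
        constructor
        · rintro ⟨h1, h2, h3⟩; exact ⟨h1, h3⟩
        · rintro ⟨h1, h2⟩; exact ⟨h1, by linarith, h2⟩
      have e2 : Iic x ∩ Ioo 0 1 = Ioc 0 x := by
        ext y; simp only [mem_inter_iff, mem_Iic, mem_Ioo, mem_Ioc]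
        constructor
        · rintro ⟨h1, h2, h3⟩; exact ⟨h2, h1⟩
        · rintro ⟨h1, h2⟩; exact ⟨h2, h1, by linarith⟩
      rw [e1, e2, hIco, hIoc, h0, h1]
      rw [hsym x ⟨le_of_lt hx, le_of_lt hx1⟩]
      ring_nf
    · have e1 : Ici (1 - x) ∩ Ioo 0 1 = Ioo 0 1 := by
        apply inter_eq_self_of_subset_right
        intro y hy; simp only [mem_Ici]; have := hy.1; simp only [mem_Ioo] at hy; linarith
      have e2 : Iic x ∩ Ioo 0 1 = Ioo 0 1 := by
        apply inter_eq_self_of_subset_right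
        intro y hy; simp only [mem_Iic]; simp only [mem_Ioo] at hy; linarith
      rw [e1, e2]
  -- shift measure identity
  have shift_eq : h.measure.restrict (Ioi 1)
      = (2:ENNReal)⁻¹ • Measure.map (fun x : ℝ => x + 1) (h.measure.restrict (Ioi 0)) := by
    refine Measure.ext_of_Iic _ _ (fun x => ?_)
    rw [Measure.smul_apply, Measure.map_apply (measurable_add_const 1) measurableSet_Iic]
    have hpre : (fun x : ℝ => x + 1) ⁻¹' (Iic x) = Iic (x - 1) := by
      ext y; simp only [mem_preimage, mem_Iic]; constructor <;> intro <;> linarith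
    rw [hpre, Measure.restrict_apply measurableSet_Iic,
      Measure.restrict_apply measurableSet_Iic]
    have e1 : Iic x ∩ Ioi 1 = Ioc 1 x := by
      ext y; simp only [mem_inter_iff, mem_Iic, mem_Ioi, mem_Ioc]; tauto
    have e2 : Iic (x - 1) ∩ Ioi 0 = Ioc 0 (x - 1) := by
      ext y; simp only [mem_inter_iff, mem_Iic, mem_Ioi, mem_Ioc]; tauto
    rw [e1, e2, hIoc, hIoc, h0, h1]
    rcases le_or_gt x 1 with hx | hx
    · have hx2 : (h : ℝ → ℝ) x ≤ 1 := by have := h.mono hx; linarith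
      have hx3 : (h : ℝ → ℝ) (x - 1) ≤ 0 := by
        have := h.mono (show x - 1 ≤ (0:ℝ) by linarith); linarith
      rw [ENNReal.ofReal_of_nonpos (by linarith), ENNReal.ofReal_of_nonpos (by linarith)]
      simp
    · have hx1 : (0:ℝ) ≤ x - 1 := by linarith
      have := hshift (x - 1) hx1
      have hxx : x - 1 + 1 = x := by ring
      rw [hxx] at this
      have hnn : 0 ≤ h (x - 1) - 0 := by
        have : h 0 ≤ h (x - 1) := h.mono hx1; linarith [h0 ▸ this]
      rw [show h x - 1 = (h (x - 1) - 0) / 2 by linarith]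
      rw [ENNReal.ofReal_div_of_pos zero_lt_two]
      simp [ENNReal.div_eq_inv_mul, ENNReal.ofReal_ofNat]
  -- integrability
  have intgr : ∀ (f : ℝ → ℝ), Continuous f → (∀ x, |f x| ≤ 1) →
      ∀ S : Set ℝ, S ⊆ Ici 0 → IntegrableOn f S h.measure := by
    intro f hf hb S hSs
    haveI : IsFiniteMeasure (h.measure.restrict S) := ⟨by rw [Measure.restrict_apply_univ]; exact lt_top_iff_ne_top.mpr (finS S hSs)⟩
    exact Integrable.mono' (integrable_const 1) hf.aestronglyMeasurable (ae_of_all _ hb)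
  have ccos : ∀ t : ℝ, Continuous fun x : ℝ => Real.cos (x * t) := fun t =>
    Real.continuous_cos.comp (continuous_id.mul continuous_const)
  have csin : ∀ t : ℝ, Continuous fun x : ℝ => Real.sin (x * t) := fun t =>
    Real.continuous_sin.comp (continuous_id.mul continuous_const)
  -- general integral manipulation lemmas
  have refl_int : ∀ (f : ℝ → ℝ), Continuous f →
      (∫ x in Ioo (0:ℝ) 1, f x ∂h.measure) = ∫ x in Ioo (0:ℝ) 1, f (1 - x) ∂h.measure := by
    intro f hf
    conv_lhs => rw [← refl_eq]
    rw [integral_map (measurable_id'.const_sub 1).aemeasurable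
      hf.aestronglyMeasurable]
  have shift_int : ∀ (f : ℝ → ℝ), Continuous f →
      (∫ x in Ioi (1:ℝ), f x ∂h.measure)
        = (1/2) * ∫ x in Ioi (0:ℝ), f (x + 1) ∂h.measure := by
    intro f hf
    rw [show (∫ x in Ioi (1:ℝ), f x ∂h.measure)
        = ∫ x, f x ∂(h.measure.restrict (Ioi 1)) from rfl, shift_eq,
      integral_smul_measure,
      integral_map (measurable_add_const 1).aemeasurable hf.aestronglyMeasurable]
    norm_num [ENNReal.toReal_inv]
  have split_int : ∀ (f : ℝ → ℝ), Continuous f → (∀ x, |f x| ≤ 1) →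
      (∫ x in Ioi (0:ℝ), f x ∂h.measure)
        = (∫ x in Ioo (0:ℝ) 1, f x ∂h.measure) + ∫ x in Ioi (1:ℝ), f x ∂h.measure := by
    intro f hf hb
    have hdisj : Disjoint (Ioo (0:ℝ) 1) (Ici 1) :=
      disjoint_left.mpr fun x hx hx' => absurd hx' (not_le.mpr hx.2)
    have hunion : Ioo (0:ℝ) 1 ∪ Ici 1 = Ioi 0 := Ioo_union_Ici_eq_Ioi zero_lt_one
    rw [← hunion, setIntegral_union hdisj measurableSet_Ici
      (intgr f hf hb _ (fun x hx => le_of_lt hx.1))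
      (intgr f hf hb _ (fun x hx => mem_Ici.mpr (le_trans zero_le_one hx)))]
    congr 1
    exact setIntegral_congr_set (Ioi_ae_eq_Ici' (hatom 1)).symm
  -- the four key equations, for arbitrary t
  have main : ∀ t : ℝ,
      (∫ x in Ioo (0:ℝ) 1, Real.cos (x*t) ∂h.measure)
        = Real.cos t * (∫ x in Ioo (0:ℝ) 1, Real.cos (x*t) ∂h.measure)
          + Real.sin t * (∫ x in Ioo (0:ℝ) 1, Real.sin (x*t) ∂h.measure) ∧
      (∫ x in Ioo (0:ℝ) 1, Real.sin (x*t) ∂h.measure)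
        = Real.sin t * (∫ x in Ioo (0:ℝ) 1, Real.cos (x*t) ∂h.measure)
          - Real.cos t * (∫ x in Ioo (0:ℝ) 1, Real.sin (x*t) ∂h.measure) ∧
      2 * (∫ x in Ioi (1:ℝ), Real.cos (x*t) ∂h.measure)
        = Real.cos t * ((∫ x in Ioo (0:ℝ) 1, Real.cos (x*t) ∂h.measure)
            + (∫ x in Ioi (1:ℝ), Real.cos (x*t) ∂h.measure))
          - Real.sin t * ((∫ x in Ioo (0:ℝ) 1, Real.sin (x*t) ∂h.measure)
            + (∫ x in Ioi (1:ℝ), Real.sin (x*t) ∂h.measure)) ∧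
      2 * (∫ x in Ioi (1:ℝ), Real.sin (x*t) ∂h.measure)
        = Real.sin t * ((∫ x in Ioo (0:ℝ) 1, Real.cos (x*t) ∂h.measure)
            + (∫ x in Ioi (1:ℝ), Real.cos (x*t) ∂h.measure))
          + Real.cos t * ((∫ x in Ioo (0:ℝ) 1, Real.sin (x*t) ∂h.measure)
            + (∫ x in Ioi (1:ℝ), Real.sin (x*t) ∂h.measure)) := by
    intro t
    have bcos : ∀ x : ℝ, |Real.cos (x*t)| ≤ 1 := fun x => Real.abs_cos_le_one _
    have bsin : ∀ x : ℝ, |Real.sin (x*t)| ≤ 1 := fun x => Real.abs_sin_le_one _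
    have icos01 := intgr _ (ccos t) bcos (Ioo 0 1) (fun x hx => le_of_lt hx.1)
    have isin01 := intgr _ (csin t) bsin (Ioo 0 1) (fun x hx => le_of_lt hx.1)
    have icos0 := intgr _ (ccos t) bcos (Ioi 0) (fun x hx => mem_Ici.mpr (le_of_lt hx))
    have isin0 := intgr _ (csin t) bsin (Ioi 0) (fun x hx => mem_Ici.mpr (le_of_lt hx))
    refine ⟨?_, ?_, ?_, ?_⟩
    · calc (∫ x in Ioo (0:ℝ) 1, Real.cos (x*t) ∂h.measure)
          = ∫ x in Ioo (0:ℝ) 1, Real.cos ((1-x)*t) ∂h.measure := refl_int _ (ccos t)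
        _ = ∫ x in Ioo (0:ℝ) 1,
              (Real.cos t * Real.cos (x*t) + Real.sin t * Real.sin (x*t)) ∂h.measure := by
            refine integral_congr_ae (ae_of_all _ fun x => ?_)
            show Real.cos ((1-x)*t) = _
            rw [show (1-x)*t = t - x*t by ring, Real.cos_sub]
        _ = _ := by
            rw [integral_add (icos01.const_mul _) (isin01.const_mul _),
              integral_const_mul, integral_const_mul]
    · calc (∫ x in Ioo (0:ℝ) 1, Real.sin (x*t) ∂h.measure)
          = ∫ x in Ioo (0:ℝ) 1, Real.sin ((1-x)*t) ∂h.measure := refl_int _ (csin t)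
        _ = ∫ x in Ioo (0:ℝ) 1,
              (Real.sin t * Real.cos (x*t) - Real.cos t * Real.sin (x*t)) ∂h.measure := by
            refine integral_congr_ae (ae_of_all _ fun x => ?_)
            show Real.sin ((1-x)*t) = _
            rw [show (1-x)*t = t - x*t by ring, Real.sin_sub]
        _ = _ := by
            rw [integral_sub (icos01.const_mul _) (isin01.const_mul _),
              integral_const_mul, integral_const_mul]
    · have e1 : (∫ x in Ioi (1:ℝ), Real.cos (x*t) ∂h.measure)
          = (1/2) * ∫ x in Ioi (0:ℝ), Real.cos ((x+1)*t) ∂h.measure :=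
        shift_int _ (ccos t)
      have e2 : (∫ x in Ioi (0:ℝ), Real.cos ((x+1)*t) ∂h.measure)
          = Real.cos t * (∫ x in Ioi (0:ℝ), Real.cos (x*t) ∂h.measure)
            - Real.sin t * (∫ x in Ioi (0:ℝ), Real.sin (x*t) ∂h.measure) := by
        calc (∫ x in Ioi (0:ℝ), Real.cos ((x+1)*t) ∂h.measure)
            = ∫ x in Ioi (0:ℝ),
                (Real.cos t * Real.cos (x*t) - Real.sin t * Real.sin (x*t)) ∂h.measure := by
              refine integral_congr_ae (ae_of_all _ fun x => ?_)
              show Real.cos ((x+1)*t) = _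
              rw [show (x+1)*t = x*t + t by ring, Real.cos_add]; ring
          _ = _ := by
              rw [integral_sub (icos0.const_mul _) (isin0.const_mul _),
                integral_const_mul, integral_const_mul]
      rw [e2, split_int _ (ccos t) bcos, split_int _ (csin t) bsin] at e1
      linarith
    · have e1 : (∫ x in Ioi (1:ℝ), Real.sin (x*t) ∂h.measure)
          = (1/2) * ∫ x in Ioi (0:ℝ), Real.sin ((x+1)*t) ∂h.measure :=
        shift_int _ (csin t)
      have e2 : (∫ x in Ioi (0:ℝ), Real.sin ((x+1)*t) ∂h.measure)
          = Real.sin t * (∫ x in Ioi (0:ℝ), Real.cos (x*t) ∂h.measure)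
            + Real.cos t * (∫ x in Ioi (0:ℝ), Real.sin (x*t) ∂h.measure) := by
        calc (∫ x in Ioi (0:ℝ), Real.sin ((x+1)*t) ∂h.measure)
            = ∫ x in Ioi (0:ℝ),
                (Real.sin t * Real.cos (x*t) + Real.cos t * Real.sin (x*t)) ∂h.measure := by
              refine integral_congr_ae (ae_of_all _ fun x => ?_)
              show Real.sin ((x+1)*t) = _
              rw [show (x+1)*t = x*t + t by ring, Real.sin_add]; ring
          _ = _ := by
              rw [integral_add (icos0.const_mul _) (isin0.const_mul _),
                integral_const_mul, integral_const_mul]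
      rw [e2, split_int _ (ccos t) bcos, split_int _ (csin t) bsin] at e1
      linarith
  constructor
  · intro t ht
    have hsq : Real.sin (t/2) ^ 2 = 1/8 := by
      rcases ht with ht | ht <;> rw [ht]
      · rw [div_pow, mul_pow, Real.sq_sqrt (by norm_num : (2:ℝ) ≥ 0).le]
        norm_num
      · rw [neg_pow, div_pow, mul_pow, Real.sq_sqrt (by norm_num : (2:ℝ) ≥ 0).le]
        norm_num
    have hcos : Real.cos t = 3/4 := by
      have : Real.cos t = Real.cos (2 * (t/2)) := by rw [show 2*(t/2) = t by ring]
      rw [this, Real.cos_two_mul]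
      have := Real.sin_sq_add_cos_sq (t/2)
      nlinarith
    obtain ⟨Ec, Es, EA, EB⟩ := main t
    set c := ∫ x in Ioo (0:ℝ) 1, Real.cos (x*t) ∂h.measure with hc
    set s := ∫ x in Ioo (0:ℝ) 1, Real.sin (x*t) ∂h.measure with hs
    set A := ∫ x in Ioi (1:ℝ), Real.cos (x*t) ∂h.measure with hA
    set B := ∫ x in Ioi (1:ℝ), Real.sin (x*t) ∂h.measure with hB
    rw [hcos] at Ec Es EA EB
    have Eg : Real.sin t ^ 2 = 7/16 := by
      have := Real.sin_sq_add_cos_sq t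
      rw [hcos] at this; nlinarith
    show A = 0
    linear_combination (5/8) * EA - (Real.sin t/2) * EB - ((A+c)/2) * Eg + Ec
  · intro t ht
    have hsq : Real.sin (t/2) ^ 2 = 5/8 := by
      rcases ht with ht | ht <;> rw [ht]
      · rw [Real.sq_sqrt (by norm_num : (0:ℝ) ≤ 5/8)]
      · rw [neg_pow, Real.sq_sqrt (by norm_num : (0:ℝ) ≤ 5/8)]; norm_num
    have hcos : Real.cos t = -(1/4) := by
      have : Real.cos t = Real.cos (2 * (t/2)) := by rw [show 2*(t/2) = t by ring]
      rw [this, Real.cos_two_mul]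
      have := Real.sin_sq_add_cos_sq (t/2)
      nlinarith
    obtain ⟨Ec, Es, EA, EB⟩ := main t
    set c := ∫ x in Ioo (0:ℝ) 1, Real.cos (x*t) ∂h.measure with hc
    set s := ∫ x in Ioo (0:ℝ) 1, Real.sin (x*t) ∂h.measure with hs
    set A := ∫ x in Ioi (1:ℝ), Real.cos (x*t) ∂h.measure with hA
    set B := ∫ x in Ioi (1:ℝ), Real.sin (x*t) ∂h.measure with hB
    rw [hcos] at Ec Es EA EB
    have Eg : Real.sin t ^ 2 = 15/16 := by
      have := Real.sin_sq_add_cos_sq t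
      rw [hcos] at this; nlinarith
    show B = 0
    linear_combination (Real.sin t/6) * EA + (3/8) * EB - ((B+s)/6) * Eg - (1/3) * Es
end

section
/- Let h be the Minkowski question mark function extended to [0,∞) via h(x) + h(1/x) = 2. The Fourier–Stieltjes transform f(t) = ∫₀¹ e^{ixt} dh(x) tends to 0 as t → +∞ (i.e., Salem's question has an affirmative answer) if and only if both lim_{t→+∞} t∫₀^∞ h(1/x) sin(xt) dx = 2 and lim_{t→+∞} t∫₀^∞ h(1/x) cos(xt) dx = 0 hold. -/
open MeasureTheory Set Filter Topology Complex

section aux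

variable (h : StieltjesFunction ℝ) (hcont : Continuous (h : ℝ → ℝ))
    (h0 : h 0 = 0) (h1 : h 1 = 1)
    (heq1 : ∀ x ≥ (0:ℝ), h x = 2 * h (x / (x + 1)))
    (heq2 : ∀ x > (0:ℝ), h x + h (1 / x) = 2)

include hcont h0 heq2 in
lemma h_tendsto_two : Tendsto (h : ℝ → ℝ) atTop (𝓝 2) := by
  have l1 : Tendsto (fun x : ℝ => 2 - h (1 / x)) atTop (𝓝 2) := by
    have : Tendsto (fun x : ℝ => h (1 / x)) atTop (𝓝 0) := by
      have := (hcont.tendsto 0).comp tendsto_inv_atTop_zero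
      rw [h0] at this
      simpa [one_div, Function.comp_def] using this
    simpa using (tendsto_const_nhds.sub this)
  refine l1.congr' ?_
  filter_upwards [eventually_gt_atTop (0:ℝ)] with x hx
  have := heq2 x hx; linarith

include hcont in
lemma h_leftLim (x : ℝ) : Function.leftLim (h : ℝ → ℝ) x = h x :=
  (h.mono.continuousWithinAt_Iio_iff_leftLim_eq).1 hcont.continuousAt.continuousWithinAt

include hcont in
lemma h_noAtoms : NullSingletonClass h.measure := by
  constructor
  intro x
  rw [h.measure_singleton, h_leftLim h hcont, sub_self, ENNReal.ofReal_zero]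

include hcont h0 heq2 in
lemma h_le_two (x : ℝ) : h x ≤ 2 :=
  h.mono.ge_of_tendsto (h_tendsto_two h hcont h0 heq2) x

include h0 in
lemma h_nonneg {x : ℝ} (hx : 0 ≤ x) : 0 ≤ h x := h0 ▸ h.mono hx

include hcont h0 heq2 in
lemma h_measure_Ioi (x : ℝ) : h.measure (Ioi x) = ENNReal.ofReal (2 - h x) := by
  have : h.measure (Ioi x) = h.measure (Ici x) := by
    have := h_noAtoms h hcont
    exact measure_congr (Ioi_ae_eq_Ici)
  rw [this, h.measure_Ici (h_tendsto_two h hcont h0 heq2), h_leftLim h hcont]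

include hcont h0 heq2 in
lemma h_measure_Ioi_zero : h.measure (Ioi (0:ℝ)) = ENNReal.ofReal 2 := by
  rw [h_measure_Ioi h hcont h0 heq2, h0, sub_zero]

include h1 heq1 in
lemma h_pow : ∀ n : ℕ, 1 ≤ n → h (1 / (n:ℝ)) = 2 * (1/2 : ℝ)^n := by
  intro n hn
  induction n with
  | zero => omega
  | succ m ih =>
    rcases Nat.eq_or_lt_of_le hn with hm | hm
    · simp only [← hm]
      norm_num [h1]
    · have hm1 : 1 ≤ m := by omega
      have key := heq1 (1 / (m:ℝ)) (by positivity)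
      have hmpos : (0:ℝ) < m := by exact_mod_cast hm1
      have harg : (1 / (m:ℝ)) / ((1 / (m:ℝ)) + 1) = 1 / ((m:ℝ) + 1) := by
        field_simp
        ring
      rw [harg] at key
      rw [ih hm1] at key
      push_cast
      rw [pow_succ]
      linarith

include hcont h0 h1 heq1 heq2 in
lemma h_decay {x : ℝ} (hx : 0 < x) : h (1 / x) ≤ 4 * Real.exp (-(Real.log 2) * x) := by
  have hexp : ∀ y : ℝ, Real.exp (-(Real.log 2) * y) = (1/2:ℝ)^y := by
    intro y
    rw [Real.rpow_def_of_pos (by norm_num : (0:ℝ) < 1/2)]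
    congr 1
    rw [show Real.log (1/2 : ℝ) = - Real.log 2 by
      rw [one_div, Real.log_inv]]
  rw [hexp]
  rcases le_or_gt x 1 with hx1 | hx1
  · have h2 : h (1/x) ≤ 2 := h_le_two h hcont h0 heq2 _
    have : (1/2:ℝ) ≤ (1/2:ℝ)^x := by
      calc (1/2:ℝ) = (1/2:ℝ)^(1:ℝ) := by rw [Real.rpow_one]
      _ ≤ (1/2:ℝ)^x := by
        apply Real.rpow_le_rpow_of_exponent_ge (by norm_num) (by norm_num) hx1
    linarith
  · set n := ⌊x⌋₊ with hn
    have hn1 : 1 ≤ n := Nat.le_floor (by exact_mod_cast hx1.le)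
    have hnx : (n:ℝ) ≤ x := Nat.floor_le hx.le
    have hxn : x < n + 1 := Nat.lt_floor_add_one x
    have hle : h (1/x) ≤ h (1/(n:ℝ)) := by
      apply h.mono
      apply one_div_le_one_div_of_le (by exact_mod_cast hn1) hnx
    rw [h_pow h h1 heq1 n hn1] at hle
    refine hle.trans ?_
    have : ((1:ℝ)/2)^n = (1/2:ℝ)^(n:ℝ) := by
      rw [Real.rpow_natCast]
    rw [this]
    have h2 : (1/2:ℝ)^((n:ℝ)) ≤ 2 * (1/2:ℝ)^x := by
      have : (1/2:ℝ)^x ≥ (1/2:ℝ)^((n:ℝ)+1) := by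
        apply Real.rpow_le_rpow_of_exponent_ge (by norm_num) (by norm_num) hxn.le
      have he : (1/2:ℝ)^((n:ℝ)+1) = (1/2:ℝ)^(n:ℝ) * (1/2) := by
        rw [Real.rpow_add (by norm_num), Real.rpow_one]
      nlinarith [this, he]
    linarith

include hcont h0 h1 heq1 heq2 in
lemma h_int_g : IntegrableOn (fun x : ℝ => h (1 / x)) (Ioi 0) := by
  have hbd : IntegrableOn (fun x : ℝ => 4 * Real.exp (-(Real.log 2) * x)) (Ioi 0) :=
    (exp_neg_integrableOn_Ioi 0 (Real.log_pos (by norm_num))).const_mul 4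
  refine Integrable.mono' hbd ?_ ?_
  · exact ((hcont.measurable.comp (measurable_const.div measurable_id))).aestronglyMeasurable
  · filter_upwards [ae_restrict_mem measurableSet_Ioi] with x hx
    rw [Real.norm_eq_abs, _root_.abs_of_nonneg (h_nonneg h h0 (le_of_lt (by rw [mem_Ioi] at hx; positivity)))]
    exact h_decay h hcont h0 h1 heq1 heq2 hx

include hcont h0 h1 heq1 heq2 in
lemma fubini_key (t : ℝ) (ht : t ≠ 0) :
    (Complex.I * t) * ∫ x in Ioi (0:ℝ), (h (1/x) : ℂ) * Complex.exp (Complex.I * t * x)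
      = (∫ y in Ioi (0:ℝ), Complex.exp (Complex.I * t * y) ∂h.measure) - 2 := by
  set c : ℂ := Complex.I * t with hc
  have hcne : c ≠ 0 := mul_ne_zero Complex.I_ne_zero (by exact_mod_cast ht)
  set ν := h.measure.restrict (Ioi (0:ℝ)) with hν
  haveI : IsFiniteMeasure ν := by
    constructor
    rw [hν, Measure.restrict_apply_univ, h_measure_Ioi_zero h hcont h0 heq2]
    exact ENNReal.ofReal_lt_top
  set K : ℝ → ℝ → ℂ := fun x y => if x < y then Complex.exp (c * x) else 0 with hK
  have hnormE : ∀ x : ℝ, ‖Complex.exp (c * (x:ℂ))‖ = 1 := by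
    intro x
    rw [hc, show Complex.I * t * x = ((t * x : ℝ) : ℂ) * Complex.I by push_cast; ring]
    exact Complex.norm_exp_ofReal_mul_I _
  have hmeasK : Measurable (Function.uncurry K) := by
    apply Measurable.ite (measurableSet_lt measurable_fst measurable_snd)
    · exact Complex.measurable_exp.comp
        ((Complex.measurable_ofReal.comp measurable_fst).const_mul c)
    · exact measurable_const
  have hKind : ∀ x : ℝ, (fun y => K x y) =
      Set.indicator (Ioi x) (fun _ => Complex.exp (c * x)) := by
    intro x; funext y
    simp [hK, Set.indicator_apply, mem_Ioi]
  have hKind2 : ∀ y : ℝ, (fun x => K x y) =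
      Set.indicator (Iio y) (fun x : ℝ => Complex.exp (c * x)) := by
    intro y; funext x
    simp [hK, Set.indicator_apply, mem_Iio]
  have hKnorm : ∀ x y : ℝ, ‖K x y‖ = Set.indicator (Ioi x) (fun _ => (1:ℝ)) y := by
    intro x y
    by_cases hxy : x < y <;> simp [hK, hxy, hnormE, Set.indicator_apply, mem_Ioi]
  have hν_Ioi : ∀ x : ℝ, 0 < x → ν (Ioi x) = ENNReal.ofReal (h (1/x)) := by
    intro x hx
    rw [hν, Measure.restrict_apply measurableSet_Ioi,
      Set.inter_eq_self_of_subset_left (Ioi_subset_Ioi hx.le),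
      h_measure_Ioi h hcont h0 heq2]
    congr 1
    have := heq2 x hx; linarith
  have hν_IoiR : ∀ x : ℝ, 0 < x → (ν (Ioi x)).toReal = h (1/x) := by
    intro x hx
    rw [hν_Ioi x hx, ENNReal.toReal_ofReal (h_nonneg h h0 (by positivity))]
  have hprod : Integrable (Function.uncurry K) ((volume.restrict (Ioi (0:ℝ))).prod ν) := by
    rw [integrable_prod_iff hmeasK.aestronglyMeasurable]
    constructor
    · refine Filter.Eventually.of_forall (fun x => ?_)
      show Integrable (fun y => K x y) ν
      rw [hKind x]
      exact (integrable_const _).indicator measurableSet_Ioi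
    · refine (h_int_g h hcont h0 h1 heq1 heq2).congr ?_
      filter_upwards [ae_restrict_mem measurableSet_Ioi] with x hx
      rw [mem_Ioi] at hx
      show h (1/x) = ∫ y, ‖K x y‖ ∂ν
      simp only [hKnorm]
      rw [integral_indicator_const (1:ℝ) measurableSet_Ioi, smul_eq_mul, mul_one,
        measureReal_def, hν_IoiR x hx]
  have hswap := integral_integral_swap hprod
  have hL : (∫ x in Ioi (0:ℝ), (∫ y, K x y ∂ν))
      = ∫ x in Ioi (0:ℝ), (h (1/x) : ℂ) * Complex.exp (c * x) := by
    refine setIntegral_congr_fun measurableSet_Ioi (fun x hx => ?_)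
    rw [mem_Ioi] at hx
    rw [hKind x, integral_indicator_const _ measurableSet_Ioi, measureReal_def, hν_IoiR x hx,
      Complex.real_smul]
  have hexpint : Integrable (fun y : ℝ => Complex.exp (c * y)) ν := by
    refine Integrable.mono' (integrable_const (1:ℝ)) ?_ ?_
    · exact (Complex.measurable_exp.comp
        (Complex.measurable_ofReal.const_mul c)).aestronglyMeasurable
    · exact Filter.Eventually.of_forall (fun y => le_of_eq (hnormE y))
  have hνuniv : (ν Set.univ).toReal = 2 := by
    rw [hν, Measure.restrict_apply_univ, h_measure_Ioi_zero h hcont h0 heq2,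
      ENNReal.toReal_ofReal (by norm_num)]
  have hR : (∫ y, (∫ x in Ioi (0:ℝ), K x y) ∂ν)
      = ((∫ y in Ioi (0:ℝ), Complex.exp (c * y) ∂h.measure) - 2) * c⁻¹ := by
    have hinner : ∀ y : ℝ, 0 < y →
        (∫ x in Ioi (0:ℝ), K x y) = (Complex.exp (c * y) - 1) * c⁻¹ := by
      intro y hy
      rw [hKind2 y, integral_indicator measurableSet_Iio,
        Measure.restrict_restrict measurableSet_Iio,
        show Iio y ∩ Ioi (0:ℝ) = Ioo 0 y by rw [inter_comm, Ioi_inter_Iio],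
        setIntegral_congr_set Ioo_ae_eq_Ioc,
        ← intervalIntegral.integral_of_le hy.le,
        integral_exp_mul_complex hcne]
      push_cast
      rw [mul_zero, Complex.exp_zero, div_eq_mul_inv]
    calc (∫ y, (∫ x in Ioi (0:ℝ), K x y) ∂ν)
        = ∫ y, (Complex.exp (c * y) - 1) * c⁻¹ ∂ν := by
          refine integral_congr_ae ?_
          filter_upwards [ae_restrict_mem measurableSet_Ioi] with y hy
          exact hinner y hy
      _ = ((∫ y in Ioi (0:ℝ), Complex.exp (c * y) ∂h.measure) - 2) * c⁻¹ := by
          rw [integral_mul_const, integral_sub hexpint (integrable_const 1),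
            integral_const, measureReal_def, hνuniv]
          norm_num
          exact Or.inl rfl
  rw [hL, hR] at hswap
  rw [hc] at hswap ⊢
  rw [hswap]
  have htc : (t:ℂ) ≠ 0 := by exact_mod_cast ht
  rw [mul_comm (Complex.I * (t:ℂ)), mul_assoc _ (Complex.I * (t:ℂ))⁻¹,
    inv_mul_cancel₀ (mul_ne_zero Complex.I_ne_zero htc), mul_one]

include hcont h0 h1 heq1 heq2 in
lemma int_g_mul (w : ℝ → ℝ) (hw : Measurable w) (hwb : ∀ x, ‖w x‖ ≤ 1) :
    IntegrableOn (fun x : ℝ => h (1 / x) * w x) (Ioi 0) := by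
  refine Integrable.mono (h_int_g h hcont h0 h1 heq1 heq2) ?_ ?_
  · exact ((hcont.measurable.comp (measurable_const.div measurable_id)).mul
      hw).aestronglyMeasurable
  · filter_upwards [ae_restrict_mem measurableSet_Ioi] with x hx
    rw [mem_Ioi] at hx
    rw [Real.norm_eq_abs, Real.norm_eq_abs, abs_mul]
    calc |h (1/x)| * |w x| ≤ |h (1/x)| * 1 := by
          refine mul_le_mul_of_nonneg_left ?_ (abs_nonneg _)
          simpa [Real.norm_eq_abs] using hwb x
      _ = |h (1/x)| := mul_one _

include hcont h0 h1 heq1 heq2 in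
lemma sincos_key (t : ℝ) (ht : 0 < t) :
    (∫ y in Ioi (0:ℝ), Complex.exp (Complex.I * t * y) ∂h.measure)
      = (((2 - t * ∫ x in Ioi (0:ℝ), h (1 / x) * Real.sin (x * t) : ℝ)) : ℂ)
        + (((t * ∫ x in Ioi (0:ℝ), h (1 / x) * Real.cos (x * t) : ℝ)) : ℂ) * Complex.I := by
  have hsin : IntegrableOn (fun x : ℝ => h (1 / x) * Real.sin (x * t)) (Ioi 0) :=
    int_g_mul h hcont h0 h1 heq1 heq2 _ (by exact Real.measurable_sin.comp (measurable_id.mul_const t))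
      (fun x => by rw [Real.norm_eq_abs]; exact Real.abs_sin_le_one _)
  have hcos : IntegrableOn (fun x : ℝ => h (1 / x) * Real.cos (x * t)) (Ioi 0) :=
    int_g_mul h hcont h0 h1 heq1 heq2 _ (by exact Real.measurable_cos.comp (measurable_id.mul_const t))
      (fun x => by rw [Real.norm_eq_abs]; exact Real.abs_cos_le_one _)
  have hsplit : (∫ x in Ioi (0:ℝ), (h (1/x) : ℂ) * Complex.exp (Complex.I * t * x))
      = ((∫ x in Ioi (0:ℝ), h (1 / x) * Real.cos (x * t) : ℝ) : ℂ)
        + ((∫ x in Ioi (0:ℝ), h (1 / x) * Real.sin (x * t) : ℝ) : ℂ) * Complex.I := by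
    have hpt : ∀ x : ℝ, (h (1/x) : ℂ) * Complex.exp (Complex.I * t * x)
        = ((h (1 / x) * Real.cos (x * t) : ℝ) : ℂ)
          + ((h (1 / x) * Real.sin (x * t) : ℝ) : ℂ) * Complex.I := by
      intro x
      rw [show Complex.I * t * x = ((x * t : ℝ) : ℂ) * Complex.I by push_cast; ring,
        Complex.exp_mul_I, ← Complex.ofReal_cos, ← Complex.ofReal_sin]
      push_cast
      ring
    simp_rw [hpt]
    have hu' : Integrable (fun x => ((h (1 / x) * Real.cos (x * t) : ℝ) : ℂ))
        (volume.restrict (Ioi 0)) := hcos.ofReal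
    have hv' : Integrable (fun x => ((h (1 / x) * Real.sin (x * t) : ℝ) : ℂ) * Complex.I)
        (volume.restrict (Ioi 0)) := hsin.ofReal.mul_const Complex.I
    rw [integral_add hu' hv', integral_mul_const]
    have e1 : ∫ x in Ioi (0:ℝ), ((h (1 / x) * Real.cos (x * t) : ℝ) : ℂ)
        = ((∫ x in Ioi (0:ℝ), h (1 / x) * Real.cos (x * t) : ℝ) : ℂ) := integral_ofReal
    have e2 : ∫ x in Ioi (0:ℝ), ((h (1 / x) * Real.sin (x * t) : ℝ) : ℂ)
        = ((∫ x in Ioi (0:ℝ), h (1 / x) * Real.sin (x * t) : ℝ) : ℂ) := integral_ofReal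
    rw [e1, e2]
  have hkey := fubini_key h hcont h0 h1 heq1 heq2 t (ne_of_gt ht)
  rw [hsplit] at hkey
  push_cast
  linear_combination (-1 : ℂ) * hkey
    + (↑t * ((∫ x in Ioi (0:ℝ), h (1 / x) * Real.sin (x * t) : ℝ) : ℂ)) * Complex.I_sq

include hcont h0 h1 heq2 in
lemma map_inv_eq :
    Measure.map (fun u : ℝ => u⁻¹) (h.measure.restrict (Ioo 0 1))
      = h.measure.restrict (Ioi 1) := by
  haveI : IsFiniteMeasure (h.measure.restrict (Ioo 0 1)) := by
    constructor
    rw [Measure.restrict_apply_univ, h.measure_Ioo]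
    exact ENNReal.ofReal_lt_top
  refine Measure.ext_of_Iic _ _ (fun a => ?_)
  rw [Measure.map_apply measurable_inv measurableSet_Iic,
    Measure.restrict_apply measurableSet_Iic,
    Measure.restrict_apply (measurableSet_Iic.preimage measurable_inv)]
  rcases le_or_gt a 1 with ha | ha
  · have e1 : (fun u : ℝ => u⁻¹) ⁻¹' (Iic a) ∩ Ioo 0 1 = ∅ := by
      ext u
      simp only [mem_inter_iff, mem_preimage, mem_Iic, mem_Ioo, mem_empty_iff_false,
        iff_false, not_and]
      intro hua hu0
      intro hu1
      have : (1:ℝ) < u⁻¹ := (one_lt_inv₀ hu0).2 hu1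
      linarith
    have e2 : Iic a ∩ Ioi 1 = ∅ := by
      ext u
      simp only [mem_inter_iff, mem_Iic, mem_Ioi, mem_empty_iff_false, iff_false, not_and]
      intro hua
      linarith
    rw [e1, e2]
  · have e1 : (fun u : ℝ => u⁻¹) ⁻¹' (Iic a) ∩ Ioo 0 1 = Ico a⁻¹ 1 := by
      ext u
      simp only [mem_inter_iff, mem_preimage, mem_Iic, mem_Ioo, mem_Ico]
      constructor
      · rintro ⟨hua, hu0, hu1⟩
        refine ⟨?_, hu1⟩
        exact (inv_le_comm₀ hu0 (by linarith)).1 hua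
      · rintro ⟨hau, hu1⟩
        have hu0 : 0 < u := lt_of_lt_of_le (by positivity) hau
        refine ⟨?_, hu0, hu1⟩
        rw [inv_le_comm₀ hu0 (by linarith)]
        exact hau
    have e2 : Iic a ∩ Ioi 1 = Ioc 1 a := by
      ext u
      simp only [mem_inter_iff, mem_Iic, mem_Ioi, mem_Ioc]
      tauto
    rw [e1, e2, h.measure_Ico, h.measure_Ioc, h_leftLim h hcont, h_leftLim h hcont]
    have hha := heq2 a (by linarith)
    rw [one_div] at hha
    rw [h1]
    congr 1
    linarith

include hcont h0 h1 heq1 heq2 in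
lemma map_s_eq :
    Measure.map (fun w : ℝ => w / (w + 1)) (h.measure.restrict (Ioi 0))
      = (2:ENNReal) • h.measure.restrict (Ioo 0 1) := by
  haveI : IsFiniteMeasure (h.measure.restrict (Ioi 0)) := by
    constructor
    rw [Measure.restrict_apply_univ, h_measure_Ioi_zero h hcont h0 heq2]
    exact ENNReal.ofReal_lt_top
  have hS : Measurable (fun w : ℝ => w / (w + 1)) :=
    measurable_id.div (measurable_id.add_const 1)
  refine Measure.ext_of_Iic _ _ (fun a => ?_)
  rw [Measure.map_apply hS measurableSet_Iic,
    Measure.smul_apply,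
    Measure.restrict_apply measurableSet_Iic,
    Measure.restrict_apply (measurableSet_Iic.preimage hS)]
  rcases le_or_gt a 0 with ha | ha
  · have e1 : (fun w : ℝ => w / (w + 1)) ⁻¹' (Iic a) ∩ Ioi 0 = ∅ := by
      ext w
      simp only [mem_inter_iff, mem_preimage, mem_Iic, mem_Ioi, mem_empty_iff_false,
        iff_false, not_and]
      intro hwa hw0
      have : (0:ℝ) < w / (w + 1) := by positivity
      linarith
    have e2 : Iic a ∩ Ioo 0 1 = ∅ := by
      ext u
      simp only [mem_inter_iff, mem_Iic, mem_Ioo, mem_empty_iff_false, iff_false, not_and]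
      intro hua hu0
      linarith
    rw [e1, e2]
    simp
  rcases lt_or_ge a 1 with ha1 | ha1
  · have e1 : (fun w : ℝ => w / (w + 1)) ⁻¹' (Iic a) ∩ Ioi 0 = Ioc 0 (a / (1 - a)) := by
      ext w
      simp only [mem_inter_iff, mem_preimage, mem_Iic, mem_Ioi, mem_Ioc]
      constructor
      · rintro ⟨hwa, hw0⟩
        refine ⟨hw0, ?_⟩
        rw [div_le_iff₀ (by linarith)] at hwa
        rw [le_div_iff₀ (by linarith)]
        linarith
      · rintro ⟨hw0, hwa⟩
        rw [le_div_iff₀ (by linarith)] at hwa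
        refine ⟨?_, hw0⟩
        rw [div_le_iff₀ (by linarith)]
        linarith
    have e2 : Iic a ∩ Ioo 0 1 = Ioc 0 a := by
      ext u
      simp only [mem_inter_iff, mem_Iic, mem_Ioo, mem_Ioc]
      constructor
      · rintro ⟨hua, hu0, hu1⟩; exact ⟨hu0, hua⟩
      · rintro ⟨hu0, hua⟩; exact ⟨hua, hu0, by linarith⟩
    rw [e1, e2, h.measure_Ioc, h.measure_Ioc, h0, sub_zero, sub_zero]
    have h1a : (1:ℝ) - a ≠ 0 := by linarith
    have harg : (a / (1 - a)) / ((a / (1 - a)) + 1) = a := by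
      have e : a / (1 - a) + 1 = 1 / (1 - a) := by field_simp; ring
      rw [e]
      field_simp
    have := heq1 (a / (1 - a)) (le_of_lt (div_pos ha (by linarith)))
    rw [harg] at this
    rw [this, smul_eq_mul, ENNReal.ofReal_mul (by norm_num)]
    norm_num
  · have e1 : (fun w : ℝ => w / (w + 1)) ⁻¹' (Iic a) ∩ Ioi 0 = Ioi 0 := by
      ext w
      simp only [mem_inter_iff, mem_preimage, mem_Iic, mem_Ioi, and_iff_right_iff_imp]
      intro hw0
      have : w / (w + 1) < 1 := by
        rw [div_lt_one (by linarith)]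
        linarith
      linarith
    have e2 : Iic a ∩ Ioo 0 1 = Ioo 0 1 := by
      ext u
      simp only [mem_inter_iff, mem_Iic, mem_Ioo, and_iff_right_iff_imp]
      rintro ⟨hu0, hu1⟩
      linarith
    rw [e1, e2, h_measure_Ioi_zero h hcont h0 heq2, h.measure_Ioo,
      h_leftLim h hcont, h1, h0, sub_zero, smul_eq_mul]
    norm_num

lemma normE (t y : ℝ) : ‖Complex.exp (Complex.I * t * y)‖ = 1 := by
  rw [show Complex.I * t * y = ((t * y : ℝ) : ℂ) * Complex.I by push_cast; ring]
  exact Complex.norm_exp_ofReal_mul_I _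

lemma int_bdd {μ' : Measure ℝ} [IsFiniteMeasure μ'] {ψ : ℝ → ℂ}
    (hm : Measurable ψ) (hb : ∀ y, ‖ψ y‖ ≤ 1) : Integrable ψ μ' :=
  Integrable.mono' (integrable_const (1:ℝ)) hm.aestronglyMeasurable
    (Filter.Eventually.of_forall hb)

include hcont h0 h1 heq1 heq2 in
lemma key_identity (t : ℝ) :
    (2 - Complex.exp (Complex.I * t))
        * (∫ y in Ioi (0:ℝ), Complex.exp (Complex.I * t * y) ∂h.measure)
      = 2 * ∫ x in Ioo (0:ℝ) 1, Complex.exp (Complex.I * t * x) ∂h.measure := by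
  haveI := h_noAtoms h hcont
  set E : ℝ → ℂ := fun y => Complex.exp (Complex.I * t * y) with hE
  have hEmeas : Measurable E :=
    Complex.measurable_exp.comp ((Complex.measurable_ofReal.const_mul _))
  have hEb : ∀ y, ‖E y‖ ≤ 1 := fun y => le_of_eq (normE t y)
  have hEinvmeas : Measurable (fun y : ℝ => E y⁻¹) := hEmeas.comp measurable_inv
  have hEinvb : ∀ y, ‖E y⁻¹‖ ≤ 1 := fun y => hEb _
  haveI hfin0 : IsFiniteMeasure (h.measure.restrict (Ioo 0 1)) := by
    constructor
    rw [Measure.restrict_apply_univ, h.measure_Ioo]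
    exact ENNReal.ofReal_lt_top
  haveI hfinP : IsFiniteMeasure (h.measure.restrict (Ioi 0)) := by
    constructor
    rw [Measure.restrict_apply_univ, h_measure_Ioi_zero h hcont h0 heq2]
    exact ENNReal.ofReal_lt_top
  haveI hfin1 : IsFiniteMeasure (h.measure.restrict (Ioi 1)) := by
    constructor
    rw [Measure.restrict_apply_univ, h_measure_Ioi h hcont h0 heq2]
    exact ENNReal.ofReal_lt_top
  haveI hfinIci : IsFiniteMeasure (h.measure.restrict (Ici 1)) := by
    constructor
    rw [Measure.restrict_apply_univ, h.measure_Ici (h_tendsto_two h hcont h0 heq2)]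
    exact ENNReal.ofReal_lt_top
  -- step 1 : the integral over (1,∞) of any bounded measurable ψ
  have step1 : ∀ ψ : ℝ → ℂ, Measurable ψ → (∀ y, ‖ψ y‖ ≤ 1) →
      (∫ y in Ioi (1:ℝ), ψ y ∂h.measure) = ∫ u in Ioo (0:ℝ) 1, ψ u⁻¹ ∂h.measure := by
    intro ψ hm hb
    rw [← map_inv_eq h hcont h0 h1 heq2,
      integral_map measurable_inv.aemeasurable hm.aestronglyMeasurable]
  -- step 2 : transfer from (0,1) to (0,∞)
  have step2 : ∀ ψ : ℝ → ℂ, Measurable ψ → (∀ y, ‖ψ y‖ ≤ 1) →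
      (∫ w in Ioi (0:ℝ), ψ (w / (w + 1)) ∂h.measure)
        = 2 * ∫ u in Ioo (0:ℝ) 1, ψ u ∂h.measure := by
    intro ψ hm hb
    have hS : Measurable (fun w : ℝ => w / (w + 1)) :=
      measurable_id.div (measurable_id.add_const 1)
    rw [← integral_map hS.aemeasurable hm.aestronglyMeasurable,
      map_s_eq h hcont h0 h1 heq1 heq2, integral_smul_measure]
    norm_num
  -- split the integral over (0,∞)
  have hsplit : ∀ ψ : ℝ → ℂ, Measurable ψ → (∀ y, ‖ψ y‖ ≤ 1) →
      (∫ y in Ioi (0:ℝ), ψ y ∂h.measure)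
        = (∫ y in Ioo (0:ℝ) 1, ψ y ∂h.measure) + ∫ y in Ioi (1:ℝ), ψ y ∂h.measure := by
    intro ψ hm hb
    have hIci : (∫ y in Ici (1:ℝ), ψ y ∂h.measure) = ∫ y in Ioi (1:ℝ), ψ y ∂h.measure :=
      (setIntegral_congr_set (Ioi_ae_eq_Ici (μ := h.measure)).symm)
    have hdis : Disjoint (Ioo (0:ℝ) 1) (Ici 1) := by
      rw [Set.disjoint_left]
      rintro x ⟨_, hx1⟩ hx1'
      exact absurd hx1' (not_le.mpr hx1)
    rw [← hIci, ← setIntegral_union hdis measurableSet_Ici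
      (int_bdd (μ' := h.measure.restrict (Ioo (0:ℝ) 1)) hm hb)
      (int_bdd (μ' := h.measure.restrict (Ici (1:ℝ))) hm hb),
      Ioo_union_Ici_eq_Ioi (by norm_num : (0:ℝ) < 1)]
  -- notation
  set ft : ℂ := ∫ x in Ioo (0:ℝ) 1, E x ∂h.measure with hft
  set G : ℂ := ∫ y in Ioi (1:ℝ), E y ∂h.measure with hG
  -- F = ft + G
  have hF : (∫ y in Ioi (0:ℝ), E y ∂h.measure) = ft + G := hsplit E hEmeas hEb
  -- G = ∫_{(0,1)} E u⁻¹
  have hG1 : G = ∫ u in Ioo (0:ℝ) 1, E u⁻¹ ∂h.measure := step1 E hEmeas hEb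
  -- ∫_{(1,∞)} E y⁻¹ = ft
  have hG2 : (∫ y in Ioi (1:ℝ), E y⁻¹ ∂h.measure) = ft := by
    rw [step1 _ hEinvmeas hEinvb]
    simp only [inv_inv, hft]
  -- the self-similarity : 2 * G = exp(I t) * (G + ft)
  have hself : 2 * G = Complex.exp (Complex.I * t) * (G + ft) := by
    have happ := step2 (fun u => E u⁻¹) hEinvmeas hEinvb
    have hpt : ∀ w : ℝ, w ∈ Ioi (0:ℝ) →
        E ((w / (w + 1))⁻¹) = Complex.exp (Complex.I * t) * E w⁻¹ := by
      intro w hw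
      rw [mem_Ioi] at hw
      have : (w / (w + 1))⁻¹ = 1 + w⁻¹ := by
        rw [inv_div]
        field_simp
      rw [hE]
      simp only []
      rw [this, ← Complex.exp_add]
      congr 1
      push_cast
      ring
    have hL : (∫ w in Ioi (0:ℝ), E ((w / (w + 1))⁻¹) ∂h.measure)
        = Complex.exp (Complex.I * t) * ∫ w in Ioi (0:ℝ), E w⁻¹ ∂h.measure := by
      rw [setIntegral_congr_fun measurableSet_Ioi hpt, integral_const_mul]
    have hsplit2 := hsplit (fun y => E y⁻¹) hEinvmeas hEinvb
    rw [hL, hsplit2, hG2, ← hG1] at happ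
    exact happ.symm
  rw [hF]
  linear_combination hself

end aux

/-- Salem's problem, equivalent form: for the (extended) Minkowski question mark function
`h`, the Fourier–Stieltjes transform `f t = ∫₀¹ e^{ixt} dh(x)` tends to `0` as `t → +∞`
iff `lim_{t→∞} t ∫₀^∞ h(1/x) sin(xt) dx = 2` and `lim_{t→∞} t ∫₀^∞ h(1/x) cos(xt) dx = 0`. -/
theorem stmt17 (h : StieltjesFunction ℝ) (hcont : Continuous (h : ℝ → ℝ))
    (hmono : StrictMonoOn (h : ℝ → ℝ) (Set.Icc 0 1))
    (h0 : h 0 = 0) (h1 : h 1 = 1)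
    (hsym : ∀ x ∈ Set.Icc (0:ℝ) 1, h x = 1 - h (1 - x))
    (heq1 : ∀ x ≥ (0:ℝ), h x = 2 * h (x / (x + 1)))
    (heq2 : ∀ x > (0:ℝ), h x + h (1 / x) = 2)
    (f : ℝ → ℂ)
    (hf : ∀ t : ℝ, f t =
      ∫ x in Set.Icc (0:ℝ) 1, Complex.exp (Complex.I * ((x * t : ℝ) : ℂ)) ∂h.measure) :
    Tendsto f atTop (𝓝 0) ↔
      (Tendsto (fun t : ℝ =>
          t * ∫ x in Set.Ioi (0:ℝ), h (1 / x) * Real.sin (x * t)) atTop (𝓝 2) ∧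
       Tendsto (fun t : ℝ =>
          t * ∫ x in Set.Ioi (0:ℝ), h (1 / x) * Real.cos (x * t)) atTop (𝓝 0)) := by
  haveI := h_noAtoms h hcont
  set F : ℝ → ℂ := fun t => ∫ y in Ioi (0:ℝ), Complex.exp (Complex.I * t * y) ∂h.measure
    with hFdef
  set S : ℝ → ℝ := fun t => ∫ x in Ioi (0:ℝ), h (1 / x) * Real.sin (x * t) with hSdef
  set C : ℝ → ℝ := fun t => ∫ x in Ioi (0:ℝ), h (1 / x) * Real.cos (x * t) with hCdef
  have hfio : ∀ t : ℝ, f t = ∫ x in Ioo (0:ℝ) 1, Complex.exp (Complex.I * t * x) ∂h.measure := by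
    intro t
    rw [hf t, setIntegral_congr_set (Ioo_ae_eq_Icc (μ := h.measure)).symm]
    refine setIntegral_congr_fun measurableSet_Ioo (fun x hx => ?_)
    congr 1
    push_cast
    ring
  have hkey : ∀ t : ℝ, (2 - Complex.exp (Complex.I * t)) * F t = 2 * f t := by
    intro t
    rw [hfio t]
    exact key_identity h hcont h0 h1 heq1 heq2 t
  have hnE : ∀ t : ℝ, ‖Complex.exp (Complex.I * (t:ℂ))‖ = 1 := by
    intro t
    rw [mul_comm]
    exact Complex.norm_exp_ofReal_mul_I t
  have hlow : ∀ t : ℝ, (1:ℝ) ≤ ‖(2:ℂ) - Complex.exp (Complex.I * t)‖ := by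
    intro t
    have := norm_sub_norm_le (2:ℂ) (Complex.exp (Complex.I * t))
    have h2 : ‖(2:ℂ)‖ = 2 := by norm_num
    rw [hnE t, h2] at this
    linarith
  have hup : ∀ t : ℝ, ‖(2:ℂ) - Complex.exp (Complex.I * t)‖ ≤ 3 := by
    intro t
    have := norm_sub_le (2:ℂ) (Complex.exp (Complex.I * t))
    have h2 : ‖(2:ℂ)‖ = 2 := by norm_num
    rw [hnE t, h2] at this
    linarith
  have hFf : ∀ t : ℝ, ‖F t‖ ≤ 2 * ‖f t‖ := by
    intro t
    have e1 : ‖F t‖ ≤ ‖(2 - Complex.exp (Complex.I * t)) * F t‖ := by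
      rw [norm_mul]
      nlinarith [norm_nonneg (F t), hlow t]
    rw [hkey t, norm_mul] at e1
    simpa using e1
  have hfF : ∀ t : ℝ, ‖f t‖ ≤ (3/2) * ‖F t‖ := by
    intro t
    have e1 : ‖(2 - Complex.exp (Complex.I * t)) * F t‖ ≤ 3 * ‖F t‖ := by
      rw [norm_mul]
      nlinarith [norm_nonneg (F t), hup t]
    rw [hkey t, norm_mul] at e1
    have : (2:ℝ) * ‖f t‖ ≤ 3 * ‖F t‖ := by simpa using e1
    linarith
  have hequivA : Tendsto f atTop (𝓝 0) ↔ Tendsto F atTop (𝓝 0) := by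
    constructor
    · intro hff
      refine squeeze_zero_norm hFf ?_
      have := hff.norm
      simp only [norm_zero] at this
      simpa using this.const_mul 2
    · intro hFF
      refine squeeze_zero_norm hfF ?_
      have := hFF.norm
      simp only [norm_zero] at this
      simpa using this.const_mul (3/2)
  have hsc : ∀ t : ℝ, 0 < t →
      F t = ((2 - t * S t : ℝ) : ℂ) + ((t * C t : ℝ) : ℂ) * Complex.I := by
    intro t ht
    exact sincos_key h hcont h0 h1 heq1 heq2 t ht
  rw [hequivA]
  constructor
  · intro hFF
    have hre : Tendsto (fun t => (F t).re) atTop (𝓝 0) := by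
      have := (Complex.continuous_re.tendsto 0).comp hFF
      simpa [Function.comp_def] using this
    have him : Tendsto (fun t => (F t).im) atTop (𝓝 0) := by
      have := (Complex.continuous_im.tendsto 0).comp hFF
      simpa [Function.comp_def] using this
    constructor
    · have hlim : Tendsto (fun t => 2 - (F t).re) atTop (𝓝 2) := by
        have : Tendsto (fun t => (2:ℝ) - (F t).re) atTop (𝓝 (2 - 0)) :=
          tendsto_const_nhds.sub hre
        simpa using this
      refine Tendsto.congr' ?_ hlim
      filter_upwards [eventually_gt_atTop (0:ℝ)] with t ht
      rw [hsc t ht]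
      simp only [Complex.add_re, Complex.ofReal_re, Complex.mul_re, Complex.ofReal_im,
        Complex.I_re, Complex.I_im, mul_zero, zero_mul, sub_zero, mul_one]
      ring
    · refine Tendsto.congr' ?_ him
      filter_upwards [eventually_gt_atTop (0:ℝ)] with t ht
      rw [hsc t ht]
      simp only [Complex.add_im, Complex.ofReal_im, Complex.mul_im, Complex.ofReal_re,
        Complex.I_im, Complex.I_re, mul_zero, zero_mul, mul_one, zero_add, add_zero]
      rfl
  · rintro ⟨hS, hC⟩
    have l1 : Tendsto (fun t : ℝ => ((2 - t * S t : ℝ) : ℂ) + ((t * C t : ℝ) : ℂ) * Complex.I)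
        atTop (𝓝 0) := by
      have e1 : Tendsto (fun t : ℝ => (2 - t * S t : ℝ)) atTop (𝓝 0) := by
        have h2 : Tendsto (fun t : ℝ => (2:ℝ) - t * S t) atTop (𝓝 (2 - 2)) :=
          (tendsto_const_nhds (x := (2:ℝ))).sub hS
        simpa using h2
      have e2 : Tendsto (fun t : ℝ => ((2 - t * S t : ℝ) : ℂ)) atTop (𝓝 0) := by
        have := (Complex.continuous_ofReal.tendsto 0).comp e1
        simpa only [Function.comp_def, Complex.ofReal_zero] using this
      have e3 : Tendsto (fun t : ℝ => ((t * C t : ℝ) : ℂ)) atTop (𝓝 0) := by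
        have := (Complex.continuous_ofReal.tendsto 0).comp hC
        simpa only [Function.comp_def, Complex.ofReal_zero] using this
      have := e2.add (e3.mul_const Complex.I)
      simpa using this
    refine Tendsto.congr' ?_ l1
    filter_upwards [eventually_gt_atTop (0:ℝ)] with t ht
    exact (hsc t ht).symm
end

section
/- Let μ be a finite Borel measure on [0,1] such that its Fourier–Stieltjes coefficients at integer frequencies vanish: ∫₀¹ e^{2πinx} dμ(x) → 0 as n → ∞ (through integers). Then for every k ∈ ℕ, the k-th derivative of the Fourier–Stieltjes transform vanishes at infinity: ∫₀¹ (ix)^k e^{itx} dμ(x) → 0 as |t| → ∞. -/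
set_option maxHeartbeats 1000000
open MeasureTheory Set Filter Topology

noncomputable def ee (n : ℤ) (x : ℝ) : ℂ := Complex.exp (2 * Real.pi * Complex.I * (n : ℂ) * (x : ℂ))

lemma ee_norm (n : ℤ) (x : ℝ) : ‖ee n x‖ = 1 := by
  simp [ee, Complex.norm_exp]

lemma ee_eq_pow (n : ℕ) (x : ℝ) : ee n x = (ee 1 x) ^ n := by
  rw [ee, ee, ← Complex.exp_nat_mul]; push_cast; ring_nf

lemma ee_continuous (n : ℤ) : Continuous (ee n) := by
  exact Complex.continuous_exp.comp (by continuity)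

lemma ee_one_eq_one_iff {x : ℝ} (hx : x ∈ Icc (0:ℝ) 1) : ee 1 x = 1 ↔ x = 0 ∨ x = 1 := by
  rw [ee, Complex.exp_eq_one_iff]
  constructor
  · rintro ⟨m, hm⟩
    have h2 : (2 * (Real.pi:ℂ) * Complex.I) ≠ 0 := by
      simp [Real.pi_ne_zero, Complex.I_ne_zero, Complex.ofReal_ne_zero]
    have hxc : (x : ℂ) = (m : ℂ) := by
      apply mul_left_cancel₀ h2
      rw [show (2 * (Real.pi:ℂ) * Complex.I) * m = m * (2 * Real.pi * Complex.I) by ring, ← hm]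
      push_cast; ring
    have hxm : x = (m : ℝ) := by exact_mod_cast hxc
    obtain ⟨h0, h1⟩ := hx
    rw [hxm] at h0 h1 ⊢
    have h0' : (0:ℤ) ≤ m := by exact_mod_cast h0
    have h1' : m ≤ (1:ℤ) := by exact_mod_cast h1
    have : m = 0 ∨ m = 1 := by omega
    rcases this with rfl | rfl <;> simp
  · rintro (rfl | rfl)
    · exact ⟨0, by simp⟩
    · exact ⟨1, by push_cast; ring⟩

lemma integrable_bdd {μ : Measure ℝ} [IsFiniteMeasure μ] {f : ℝ → ℂ}
    (hf : AEStronglyMeasurable f μ) {M : ℝ} (hM : ∀ᵐ x ∂μ, ‖f x‖ ≤ M) : Integrable f μ :=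
  (integrable_const M).mono' hf hM

lemma ee_integrable {μ : Measure ℝ} [IsFiniteMeasure μ] (n : ℤ) : Integrable (ee n) μ :=
  integrable_bdd (ee_continuous n).aestronglyMeasurable
    (Eventually.of_forall fun x => (ee_norm n x).le)

lemma no_atoms {μ : Measure ℝ} [IsFiniteMeasure μ]
    (hae : ∀ᵐ x ∂μ, x ∈ Icc (0:ℝ) 1)
    (hc : Tendsto (fun n : ℕ => ∫ x, ee n x ∂μ) atTop (𝓝 0)) :
    μ ({0, 1} : Set ℝ) = 0 := by
  set F : ℕ → ℝ → ℂ := fun N x => (N : ℝ)⁻¹ • ∑ i ∈ Finset.range N, ee i x with hF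
  have hmeas : MeasurableSet ({0,1} : Set ℝ) :=
    (measurableSet_singleton 0).union (measurableSet_singleton 1)
  -- limit via Cesàro
  have h2 : Tendsto (fun N : ℕ => ∫ x, F N x ∂μ) atTop (𝓝 0) := by
    have := hc.cesaro_smul
    apply this.congr
    intro N
    rw [hF]
    simp only
    rw [integral_smul, integral_finset_sum _ (fun i _ => ee_integrable _)]
  -- limit via dominated convergence
  have h3 : Tendsto (fun N : ℕ => ∫ x, F N x ∂μ) atTop
      (𝓝 (∫ x, Set.indicator ({0,1} : Set ℝ) (fun _ => (1:ℂ)) x ∂μ)) := by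
    apply tendsto_integral_of_dominated_convergence (fun _ => (1:ℝ))
    · intro n
      have : Continuous (F n) := by
        rw [hF]
        exact Continuous.const_smul (g := fun x => ∑ i ∈ Finset.range n, ee i x)
          (continuous_finset_sum _ (fun i _ => ee_continuous i)) ((n:ℝ)⁻¹)
      exact this.aestronglyMeasurable
    · exact integrable_const 1
    · intro n
      filter_upwards with x
      rw [hF]
      simp only [norm_smul, norm_inv, Real.norm_natCast]
      calc ((n:ℝ))⁻¹ * ‖∑ i ∈ Finset.range n, ee i x‖
          ≤ (n:ℝ)⁻¹ * ∑ i ∈ Finset.range n, ‖ee i x‖ := by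
            gcongr; exact norm_sum_le _ _
        _ = (n:ℝ)⁻¹ * n := by
            congr 1
            simp only [ee_norm, Finset.sum_const, Finset.card_range, nsmul_eq_mul, mul_one]
        _ ≤ 1 := by
            rcases Nat.eq_zero_or_pos n with rfl | hn
            · simp
            · rw [inv_mul_cancel₀ (by positivity)]
    · filter_upwards [hae] with x hx
      by_cases hx01 : x = 0 ∨ x = 1
      · rw [Set.indicator_of_mem (by simpa using hx01)]
        have hone : ee 1 x = 1 := (ee_one_eq_one_iff hx).2 hx01
        apply Tendsto.congr' (f₁ := fun _ => (1:ℂ))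
        · filter_upwards [eventually_ge_atTop 1] with N hN
          rw [hF]
          simp only
          have : ∀ i ∈ Finset.range N, ee (i:ℤ) x = 1 := by
            intro i _; rw [ee_eq_pow, hone, one_pow]
          rw [Finset.sum_congr rfl this, Finset.sum_const, Finset.card_range, nsmul_eq_mul,
            mul_one, ← Complex.ofReal_natCast, Complex.real_smul, ← Complex.ofReal_mul,
            inv_mul_cancel₀ (by positivity : ((N:ℝ)) ≠ 0)]
          simp
        · exact tendsto_const_nhds
      · rw [Set.indicator_of_notMem (by simpa using hx01)]
        set z := ee 1 x with hz
        have hzne : z ≠ 1 := fun h => hx01 ((ee_one_eq_one_iff hx).1 h)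
        have hznorm : ‖z‖ = 1 := ee_norm 1 x
        have hzpos : 0 < ‖z - 1‖ := by
          rw [norm_pos_iff]; exact sub_ne_zero.2 hzne
        refine squeeze_zero_norm (a := fun N : ℕ => (N:ℝ)⁻¹ * (2 / ‖z - 1‖)) ?_ ?_
        · intro N
          rw [hF]
          simp only
          have hsum : ∑ i ∈ Finset.range N, ee i x = (z ^ N - 1) / (z - 1) := by
            rw [← geom_sum_eq hzne]
            exact Finset.sum_congr rfl fun i _ => ee_eq_pow i x
          rw [hsum, norm_smul, norm_inv, Real.norm_natCast, norm_div]
          gcongr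
          calc ‖z ^ N - 1‖ ≤ ‖z ^ N‖ + ‖(1:ℂ)‖ := norm_sub_le _ _
            _ = 2 := by rw [norm_pow, hznorm]; norm_num
        · have : Tendsto (fun N : ℕ => ((N:ℝ))⁻¹) atTop (𝓝 0) :=
            tendsto_inv_atTop_zero.comp tendsto_natCast_atTop_atTop
          simpa using this.mul_const (2 / ‖z - 1‖)
  have := tendsto_nhds_unique h3 h2
  rw [integral_indicator_const _ hmeas] at this
  have h0 : (μ ({0,1} : Set ℝ)).toReal = 0 := by
    simpa [Complex.real_smul, Complex.ofReal_eq_zero, measureReal_def] using this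
  rwa [ENNReal.toReal_eq_zero_iff, or_iff_left (measure_ne_top μ _)] at h0

section Key
variable {μ : Measure ℝ} [IsFiniteMeasure μ]

lemma ee_add (m n : ℤ) (x : ℝ) : ee (m + n) x = ee m x * ee n x := by
  rw [ee, ee, ee, ← Complex.exp_add]
  push_cast
  ring_nf

lemma ee_conj (n : ℤ) (x : ℝ) : (starRingEnd ℂ) (ee n x) = ee (-n) x := by
  rw [ee, ee, ← Complex.exp_conj]
  congr 1
  simp only [map_mul, Complex.conj_I, map_ofNat, map_intCast, Complex.conj_ofReal]
  push_cast
  ring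

lemma d_tendsto_cofinite
    (hc : Tendsto (fun n : ℕ => ∫ x, ee n x ∂μ) atTop (𝓝 0)) :
    Tendsto (fun n : ℤ => ∫ x, ee n x ∂μ) cofinite (𝓝 0) := by
  set d : ℤ → ℂ := fun n => ∫ x, ee n x ∂μ with hd
  have htop : Tendsto d atTop (𝓝 0) := by
    have h1 : Tendsto Int.toNat atTop atTop := by
      apply tendsto_atTop_atTop.2
      intro b
      exact ⟨(b : ℤ), fun a ha => by omega⟩
    apply (hc.comp h1).congr'
    filter_upwards [eventually_ge_atTop (0:ℤ)] with n hn
    simp only [Function.comp_apply, hd]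
    rw [show ((n.toNat : ℤ)) = n from Int.toNat_of_nonneg hn]
  have hbot : Tendsto d atBot (𝓝 0) := by
    have hconj : ∀ n : ℤ, d n = (starRingEnd ℂ) (d (-n)) := by
      intro n
      rw [hd]
      simp only
      rw [← integral_conj]
      congr 1
      ext x
      rw [ee_conj, neg_neg]
    have h2 : Tendsto (fun n : ℤ => -n) atBot atTop := tendsto_neg_atBot_atTop
    have h3 : Tendsto (fun n : ℤ => (starRingEnd ℂ) (d (-n))) atBot (𝓝 0) := by
      have := (Complex.continuous_conj.tendsto 0).comp (htop.comp h2)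
      rw [map_zero] at this
      exact this
    exact h3.congr (fun n => (hconj n).symm)
  rw [Int.cofinite_eq, tendsto_sup]
  exact ⟨hbot, htop⟩

lemma key0 (hc : Tendsto (fun n : ℕ => ∫ x, ee n x ∂μ) atTop (𝓝 0)) :
    ∀ G : C(AddCircle (1:ℝ), ℂ),
      Tendsto (fun n : ℤ => ∫ x, G x * ee n x ∂μ) cofinite (𝓝 0) := by
  haveI : Fact ((0:ℝ) < 1) := ⟨one_pos⟩
  have hd := d_tendsto_cofinite hc
  have hint : ∀ (G : C(AddCircle (1:ℝ), ℂ)) (n : ℤ),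
      Integrable (fun x : ℝ => G x * ee n x) μ := by
    intro G n
    apply integrable_bdd
    · exact ((G.continuous.comp (AddCircle.continuous_mk' 1)).mul (ee_continuous n)).aestronglyMeasurable
    · refine Eventually.of_forall (fun x => ?_)
      rw [norm_mul, ee_norm, mul_one]
      exact G.norm_coe_le_norm _
  -- span case
  have hspan : ∀ P ∈ Submodule.span ℂ (Set.range (@fourier 1)),
      Tendsto (fun n : ℤ => ∫ x, P x * ee n x ∂μ) cofinite (𝓝 0) := by
    intro P hP
    induction hP using Submodule.span_induction with
    | mem P hPmem =>
      obtain ⟨m, rfl⟩ := hPmem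
      have heq : ∀ n : ℤ, ∫ x, (fourier m) (x : AddCircle (1:ℝ)) * ee n x ∂μ
          = ∫ x, ee (m + n) x ∂μ := by
        intro n
        congr 1
        ext x
        rw [fourier_coe_apply, ee_add]
        norm_num [ee]
      have hmap : Tendsto (fun n : ℤ => m + n) cofinite cofinite :=
        (add_right_injective m).tendsto_cofinite
      have := hd.comp hmap
      exact this.congr (fun n => (heq n).symm)
    | zero => simpa using (tendsto_const_nhds : Tendsto (fun _ : ℤ => (0:ℂ)) cofinite (𝓝 0))
    | add P Q hPm hQm hP hQ =>
      have := hP.add hQ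
      rw [add_zero] at this
      apply this.congr
      intro n
      rw [← integral_add (hint P n) (hint Q n)]
      congr 1
      ext x
      simp [add_mul]
    | smul a P hPm hP =>
      have := hP.const_mul a
      rw [mul_zero] at this
      apply this.congr
      intro n
      rw [show a * ∫ (x : ℝ), P x * ee n x ∂μ = a • ∫ (x : ℝ), P x * ee n x ∂μ from rfl,
        ← integral_smul]
      congr 1
      ext x
      simp only [ContinuousMap.coe_smul, Pi.smul_apply, smul_eq_mul]
      ring
  -- density argument
  intro G
  rw [NormedAddCommGroup.tendsto_nhds_zero]
  intro ε hε
  have hdense : G ∈ closure ((Submodule.span ℂ (Set.range (@fourier 1)) :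
      Submodule ℂ C(AddCircle (1:ℝ), ℂ)) : Set C(AddCircle (1:ℝ), ℂ)) := by
    rw [← Submodule.topologicalClosure_coe, span_fourier_closure_eq_top]
    trivial
  set M := (μ Set.univ).toReal with hM
  have hMnn : 0 ≤ M := ENNReal.toReal_nonneg
  set ε₁ := ε / (2 * (M + 1)) with hε₁
  have hε₁pos : 0 < ε₁ := by positivity
  obtain ⟨P, hPmem, hPdist⟩ := Metric.mem_closure_iff.1 hdense ε₁ hε₁pos
  filter_upwards [NormedAddCommGroup.tendsto_nhds_zero.1 (hspan P hPmem) (ε/2)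
    (half_pos hε)] with n hn
  have hsplit : (∫ x, G x * ee n x ∂μ)
      = (∫ x, (G - P) x * ee n x ∂μ) + ∫ x, P x * ee n x ∂μ := by
    have : (∫ x, (G - P) x * ee n x ∂μ)
        = (∫ x, G x * ee n x ∂μ) - ∫ x, P x * ee n x ∂μ := by
      rw [← integral_sub (hint G n) (hint P n)]
      congr 1
      ext x
      simp [sub_mul]
    rw [this]
    ring
  have hbound1 : ‖∫ x, (G - P) x * ee n x ∂μ‖ ≤ ε₁ * M := by
    apply norm_integral_le_of_norm_le_const
    refine Eventually.of_forall (fun x => ?_)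
    rw [norm_mul, ee_norm, mul_one]
    calc ‖(G - P) (x : AddCircle (1:ℝ))‖ ≤ ‖G - P‖ := (G - P).norm_coe_le_norm _
      _ ≤ ε₁ := by
          rw [← dist_eq_norm]
          exact hPdist.le
  have hhalf : ε₁ * M ≤ ε / 2 := by
    rw [hε₁]
    rw [div_mul_eq_mul_div, div_le_div_iff₀ (by positivity) (by norm_num)]
    nlinarith
  calc ‖∫ x, G x * ee n x ∂μ‖
      ≤ ‖∫ x, (G - P) x * ee n x ∂μ‖ + ‖∫ x, P x * ee n x ∂μ‖ := by
        rw [hsplit]; exact norm_add_le _ _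
    _ < ε/2 + ε/2 := by
        apply add_lt_add_of_le_of_lt (hbound1.trans hhalf) hn
    _ = ε := by ring

end Key

lemma key {μ : Measure ℝ} [IsFiniteMeasure μ]
    (hae : ∀ᵐ x ∂μ, x ∈ Icc (0:ℝ) 1)
    (hc : Tendsto (fun n : ℕ => ∫ x, ee n x ∂μ) atTop (𝓝 0))
    (g : ℝ → ℂ) (hg : Continuous g) :
    Tendsto (fun n : ℤ => ∫ x, g x * ee n x ∂μ) cofinite (𝓝 0) := by
  haveI : Fact ((0:ℝ) < 1) := ⟨one_pos⟩
  have h01 := no_atoms hae hc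
  obtain ⟨M0, hM0⟩ := (isCompact_Icc (a := (0:ℝ)) (b := 1)).exists_bound_of_continuousOn
    hg.continuousOn
  obtain ⟨M, hMdef⟩ : ∃ M : ℝ, M = max M0 0 := ⟨_, rfl⟩
  have hMnn : (0:ℝ) ≤ M := hMdef ▸ le_max_right _ _
  have hgM : ∀ x ∈ Icc (0:ℝ) 1, ‖g x‖ ≤ M := fun x hx => (hM0 x hx).trans (hMdef ▸ le_max_left _ _)
  -- bad sets
  obtain ⟨δ, hδdef⟩ : ∃ δ : ℕ → ℝ, δ = fun j : ℕ => (1:ℝ) / (2 * ((j:ℕ) + 1)) := ⟨_, rfl⟩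
  have hδpos : ∀ j, 0 < δ j := fun j => by rw [hδdef]; positivity
  have hδhalf : ∀ j, δ j ≤ 1/2 := by
    intro j
    rw [hδdef]
    simp only
    rw [div_le_div_iff₀ (by positivity) (by norm_num)]
    nlinarith [Nat.cast_nonneg (α := ℝ) j]
  have hδanti : Antitone δ := by
    intro i j hij
    simp only [hδdef]
    apply one_div_le_one_div_of_le (by positivity)
    have : (i:ℝ) ≤ j := Nat.cast_le.2 hij
    linarith
  obtain ⟨B, hBdef⟩ : ∃ B : ℕ → Set ℝ, B = fun j => Icc 0 (δ j) ∪ Icc (1 - δ j) 1 := ⟨_, rfl⟩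
  have hBmeas : ∀ j, MeasurableSet (B j) := fun j => hBdef ▸ measurableSet_Icc.union measurableSet_Icc
  have hBanti : Antitone B := by
    intro i j hij
    rw [hBdef]
    apply Set.union_subset_union
    · exact Icc_subset_Icc le_rfl (hδanti hij)
    · exact Icc_subset_Icc (by linarith [hδanti hij]) le_rfl
  have hBinter : (⋂ j, B j) ⊆ ({0, 1} : Set ℝ) := by
    intro x hx
    simp only [Set.mem_iInter] at hx
    simp only [hBdef] at hx
    by_contra hx01
    simp only [Set.mem_insert_iff, Set.mem_singleton_iff, not_or] at hx01
    obtain ⟨hx0, hx1⟩ := hx01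
    have hx01' := hx 0
    have hhalf0 : δ 0 ≤ 1/2 := hδhalf 0
    have hxIcc : x ∈ Icc (0:ℝ) 1 := by
      rcases hx01' with h | h
      · exact ⟨h.1, h.2.trans (by linarith)⟩
      · refine ⟨le_trans (by linarith) h.1, h.2⟩
    have hxpos : 0 < x := lt_of_le_of_ne hxIcc.1 (Ne.symm hx0)
    have hxlt : x < 1 := lt_of_le_of_ne hxIcc.2 hx1
    obtain ⟨j, hj⟩ := exists_nat_gt (max (1/x) (1/(1-x)))
    have hδsmall : δ j < min x (1 - x) := by
      rw [hδdef]
      simp only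
      rw [lt_min_iff]
      constructor
      · rw [div_lt_iff₀ (by positivity)]
        have h1 : 1/x < (j:ℝ) := (le_max_left _ _).trans_lt hj
        rw [div_lt_iff₀ hxpos] at h1
        nlinarith
      · rw [div_lt_iff₀ (by positivity)]
        have h1 : 1/(1-x) < (j:ℝ) := (le_max_right _ _).trans_lt hj
        rw [div_lt_iff₀ (by linarith)] at h1
        nlinarith
    rcases hx j with h | h
    · have h2 := (lt_min_iff.1 hδsmall).1
      have := h.2
      linarith
    · have := h.1
      have h2 := (lt_min_iff.1 hδsmall).2
      linarith
  have hBtend : Tendsto (fun j => (μ (B j)).toReal) atTop (𝓝 0) := by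
    have h1 : Tendsto (fun j => μ (B j)) atTop (𝓝 (μ (⋂ j, B j))) :=
      tendsto_measure_iInter_atTop (fun j => (hBmeas j).nullMeasurableSet) hBanti
        ⟨0, measure_ne_top μ _⟩
    have h2 : μ (⋂ j, B j) = 0 :=
      le_antisymm (h01 ▸ measure_mono hBinter) (zero_le')
    rw [h2] at h1
    have := (ENNReal.tendsto_toReal (by simp)).comp h1
    exact this
  rw [NormedAddCommGroup.tendsto_nhds_zero]
  intro ε hε
  have hev : ∀ᶠ j in atTop, (M + 1) * (μ (B j)).toReal < ε / 2 := by
    have h3 : Tendsto (fun j => (M + 1) * (μ (B j)).toReal) atTop (𝓝 0) := by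
      simpa using hBtend.const_mul (M + 1)
    exact h3.eventually_lt_const (half_pos hε)
  obtain ⟨j, hj⟩ := hev.exists
  -- the cutoff
  obtain ⟨d0, hd0⟩ : ∃ d0 : ℝ, d0 = δ j := ⟨_, rfl⟩
  have hd0pos : 0 < d0 := hd0 ▸ hδpos j
  obtain ⟨φ, hφdef⟩ : ∃ φ : ℝ → ℝ, φ = fun x => max 0 (min 1 (min (x / d0) ((1 - x) / d0))) := ⟨_, rfl⟩
  have hφcont : Continuous φ := by
    rw [hφdef]
    apply continuous_const.max
    apply continuous_const.min
    exact (continuous_id.div_const d0).min ((continuous_const.sub continuous_id).div_const d0)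
  have hφ0 : ∀ x, 0 ≤ φ x := fun x => hφdef ▸ le_max_left _ _
  have hφ1 : ∀ x, φ x ≤ 1 := fun x => hφdef ▸ max_le zero_le_one (min_le_left _ _)
  have hφzero : φ 0 = 0 := by
    have h1 : min ((0:ℝ)/d0) ((1-0)/d0) = 0 := by
      rw [zero_div, sub_zero]
      exact min_eq_left (by positivity)
    simp only [hφdef]
    rw [h1, min_eq_right zero_le_one, max_self]
  have hφone : φ 1 = 0 := by
    have h1 : min ((1:ℝ)/d0) ((1-1)/d0) = 0 := by
      rw [sub_self, zero_div]
      exact min_eq_right (by positivity)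
    simp only [hφdef]
    rw [h1, min_eq_right zero_le_one, max_self]
  have hφmid : ∀ x ∈ Icc d0 (1 - d0), φ x = 1 := by
    intro x hx
    simp only [hφdef]
    have h1 : (1:ℝ) ≤ x / d0 := (one_le_div hd0pos).2 hx.1
    have h2 : (1:ℝ) ≤ (1 - x) / d0 := (one_le_div hd0pos).2 (by linarith [hx.2])
    rw [min_eq_left (le_min h1 h2), max_eq_right zero_le_one]
  -- the periodic function
  obtain ⟨h, hhdef⟩ : ∃ h : ℝ → ℂ, h = fun x => g x * (φ x : ℂ) := ⟨_, rfl⟩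
  have hhcont : Continuous h := hhdef ▸ hg.mul (Complex.continuous_ofReal.comp hφcont)
  have hh01 : h 0 = h (0 + 1) := by
    rw [hhdef]
    simp [hφzero, hφone]
  obtain ⟨G, hGdef⟩ : ∃ G : C(AddCircle (1:ℝ), ℂ),
      G = ⟨AddCircle.liftIco 1 0 h, AddCircle.liftIco_continuous hh01 (hhcont.continuousOn)⟩ :=
    ⟨_, rfl⟩
  have hGx : ∀ x ∈ Icc (0:ℝ) 1, G (x : AddCircle (1:ℝ)) = h x := by
    intro x hx
    rcases eq_or_lt_of_le hx.2 with rfl | hlt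
    · have hcoe : ((1:ℝ) : AddCircle (1:ℝ)) = ((0:ℝ) : AddCircle (1:ℝ)) := by
        rw [AddCircle.coe_period]
        norm_num
      rw [hGdef]
      simp only [ContinuousMap.coe_mk]
      rw [hcoe, AddCircle.liftIco_zero_coe_apply (by constructor <;> norm_num)]
      rw [hhdef]
      simp [hφzero, hφone]
    · rw [hGdef]
      exact AddCircle.liftIco_zero_coe_apply ⟨hx.1, hlt⟩
  have hG := key0 hc G
  -- integrability
  have hint_g : ∀ n : ℤ, Integrable (fun x => g x * ee n x) μ := by
    intro n
    apply integrable_bdd (hg.mul (ee_continuous n)).aestronglyMeasurable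
    filter_upwards [hae] with x hx
    rw [Pi.mul_apply, norm_mul, ee_norm, mul_one]
    exact hgM x hx
  have hint_G : ∀ n : ℤ, Integrable (fun x : ℝ => G x * ee n x) μ := by
    intro n
    apply integrable_bdd
      ((G.continuous.comp (AddCircle.continuous_mk' 1)).mul (ee_continuous n)).aestronglyMeasurable
    refine Eventually.of_forall (fun x => ?_)
    rw [Pi.mul_apply, norm_mul, ee_norm, mul_one]
    exact G.norm_coe_le_norm _
  -- error bound
  have hdiff : ∀ n : ℤ, ‖(∫ x, g x * ee n x ∂μ) - ∫ x, G x * ee n x ∂μ‖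
      ≤ (M + 1) * (μ (B j)).toReal := by
    intro n
    rw [← integral_sub (hint_g n) (hint_G n)]
    have hb : Integrable ((B j).indicator (fun _ => M + 1)) μ :=
      (integrable_const (M+1)).indicator (hBmeas j)
    calc ‖∫ x, (g x * ee n x - G x * ee n x) ∂μ‖
        ≤ ∫ x, (B j).indicator (fun _ => M + 1) x ∂μ := by
          apply norm_integral_le_of_norm_le hb
          filter_upwards [hae] with x hx
          by_cases hxB : x ∈ B j
          · rw [Set.indicator_of_mem hxB]
            rw [← sub_mul, norm_mul, ee_norm, mul_one, hGx x hx, hhdef]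
            simp only
            rw [show g x - g x * (φ x : ℂ) = g x * (1 - (φ x : ℂ)) by ring, norm_mul]
            have h1 : ‖(1 : ℂ) - (φ x : ℂ)‖ ≤ 1 := by
              rw [show (1:ℂ) - (φ x : ℂ) = ((1 - φ x : ℝ) : ℂ) by push_cast; ring,
                Complex.norm_real, Real.norm_eq_abs, abs_of_nonneg (by linarith [hφ1 x])]
              linarith [hφ0 x]
            calc ‖g x‖ * ‖(1:ℂ) - (φ x : ℂ)‖ ≤ M * 1 := by
                  apply mul_le_mul (hgM x hx) h1 (norm_nonneg _) hMnn
              _ ≤ M + 1 := by linarith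
          · rw [Set.indicator_of_notMem hxB]
            have hxmid : x ∈ Icc d0 (1 - d0) := by
              rw [hBdef] at hxB
              rw [hd0]
              simp only [Set.mem_union, not_or, Set.mem_Icc, not_and_or, not_le] at hxB
              obtain ⟨hA, hC⟩ := hxB
              constructor
              · rcases hA with h | h
                · exact absurd hx.1 (by linarith)
                · exact h.le
              · rcases hC with h | h
                · linarith
                · exact absurd hx.2 (by linarith)
            rw [hGx x hx, hhdef]
            simp only
            rw [hφmid x hxmid]
            simp
      _ = (M + 1) * (μ (B j)).toReal := by
          rw [integral_indicator_const _ (hBmeas j), smul_eq_mul, mul_comm, measureReal_def]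
  filter_upwards [NormedAddCommGroup.tendsto_nhds_zero.1 hG (ε/2) (half_pos hε)] with n hn
  calc ‖∫ x, g x * ee n x ∂μ‖
      ≤ ‖(∫ x, g x * ee n x ∂μ) - ∫ x, G x * ee n x ∂μ‖ + ‖∫ x, G x * ee n x ∂μ‖ := by
        have := norm_add_le ((∫ x, g x * ee n x ∂μ) - ∫ x, G x * ee n x ∂μ)
          (∫ x, G x * ee n x ∂μ)
        rwa [sub_add_cancel] at this
    _ < ε/2 + ε/2 := add_lt_add_of_le_of_lt ((hdiff n).trans hj.le) hn
    _ = ε := by ring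

lemma int_tendsto_cofinite {v : ℕ → ℤ} (h : Tendsto (fun j => |(v j : ℝ)|) atTop atTop) :
    Tendsto v atTop cofinite := by
  rw [tendsto_def]
  intro s hs
  rw [mem_cofinite] at hs
  obtain ⟨C, hC⟩ := (hs.image (fun z : ℤ => |(z : ℝ)|)).bddAbove
  filter_upwards [h.eventually_gt_atTop C] with j hj
  by_contra hvj
  exact absurd (hC (Set.mem_image_of_mem _ hvj)) (by push_neg; exact hj)

lemma exp2pi_diff (β1 β2 x : ℝ) (hx : x ∈ Icc (0:ℝ) 1) (h1 : 2 * Real.pi * |β1 - β2| ≤ 1) :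
    ‖Complex.exp (2 * Real.pi * Complex.I * (β1:ℂ) * x) -
      Complex.exp (2 * Real.pi * Complex.I * (β2:ℂ) * x)‖ ≤ 4 * Real.pi * |β1 - β2| := by
  have hsplit : (2 * Real.pi * Complex.I * (β1:ℂ) * x)
      = (2 * Real.pi * Complex.I * (β2:ℂ) * x) + ((2 * Real.pi * (β1 - β2) * x : ℝ) : ℂ) * Complex.I := by
    push_cast
    ring
  rw [hsplit, Complex.exp_add, show ∀ a b : ℂ, a * b - a = a * (b - 1) from fun a b => by ring]
  rw [norm_mul]
  have h2 : ‖Complex.exp (2 * Real.pi * Complex.I * (β2:ℂ) * x)‖ = 1 := by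
    have := ee_norm 1 x
    simp only [Complex.norm_exp]
    have : (2 * (Real.pi:ℂ) * Complex.I * (β2:ℂ) * x).re = 0 := by
      simp [Complex.mul_re, Complex.mul_im]
    rw [show ((2:ℂ) * Real.pi * Complex.I * (β2:ℂ) * x) = (2 * (Real.pi:ℂ) * Complex.I * (β2:ℂ) * x) from by ring, this, Real.exp_zero]
  rw [h2, one_mul]
  have habs : ‖((2 * Real.pi * (β1 - β2) * x : ℝ) : ℂ) * Complex.I‖
      = 2 * Real.pi * |β1 - β2| * |x| := by
    rw [norm_mul, Complex.norm_I, Complex.norm_real, mul_one, Real.norm_eq_abs]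
    rw [abs_mul, abs_mul]
    rw [abs_of_nonneg (by positivity : (0:ℝ) ≤ 2 * Real.pi)]
  have hxle : |x| ≤ 1 := by
    rw [abs_of_nonneg hx.1]; exact hx.2
  have habs_le : ‖((2 * Real.pi * (β1 - β2) * x : ℝ) : ℂ) * Complex.I‖ ≤ 1 := by
    rw [habs]
    calc 2 * Real.pi * |β1 - β2| * |x| ≤ 2 * Real.pi * |β1 - β2| * 1 := by
          apply mul_le_mul_of_nonneg_left hxle (by positivity)
      _ ≤ 1 := by rw [mul_one]; exact h1
  calc ‖Complex.exp (((2 * Real.pi * (β1 - β2) * x : ℝ) : ℂ) * Complex.I) - 1‖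
      ≤ 2 * ‖((2 * Real.pi * (β1 - β2) * x : ℝ) : ℂ) * Complex.I‖ :=
        Complex.norm_exp_sub_one_le habs_le
    _ = 2 * (2 * Real.pi * |β1 - β2| * |x|) := by rw [habs]
    _ ≤ 2 * (2 * Real.pi * |β1 - β2| * 1) := by
        apply mul_le_mul_of_nonneg_left (mul_le_mul_of_nonneg_left hxle (by positivity))
          (by norm_num)
    _ = 4 * Real.pi * |β1 - β2| := by ring

/-- Theorem 3: if the Fourier–Stieltjes coefficients of a finite Borel measure `μ` on
`[0,1]` vanish at infinity, then for every `k`, `∫₀¹ (ix)^k e^{itx} dμ(x) → 0` as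
`|t| → ∞`. -/
theorem stmt18 (μ : Measure ℝ) [IsFiniteMeasure μ]
    (hsupp : μ (Set.Icc (0:ℝ) 1)ᶜ = 0)
    (hcoef : Tendsto (fun n : ℕ =>
      ∫ x in Set.Icc (0:ℝ) 1,
        Complex.exp (2 * Real.pi * Complex.I * (n : ℂ) * (x : ℂ)) ∂μ) atTop (𝓝 0)) :
    ∀ k : ℕ, Tendsto (fun t : ℝ =>
      ∫ x in Set.Icc (0:ℝ) 1,
        (Complex.I * (x : ℂ)) ^ k * Complex.exp (Complex.I * ((t * x : ℝ) : ℂ)) ∂μ)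
      (cocompact ℝ) (𝓝 0) := by
  intro k
  have hae : ∀ᵐ x ∂μ, x ∈ Icc (0:ℝ) 1 := mem_ae_iff.mpr hsupp
  have hres : μ.restrict (Icc (0:ℝ) 1) = μ := Measure.restrict_eq_self_of_ae_mem hae
  have hc : Tendsto (fun n : ℕ => ∫ x, ee n x ∂μ) atTop (𝓝 0) := by
    apply hcoef.congr
    intro n
    rw [hres]
    congr 1
  simp only [hres]
  have hπ : (0:ℝ) < 2 * Real.pi := by positivity
  -- main claim for sequences with |t| → ∞
  have claim : ∀ t : ℕ → ℝ, Tendsto (fun m => |t m|) atTop atTop →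
      Tendsto (fun m => ∫ x, (Complex.I * (x : ℂ)) ^ k *
        Complex.exp (Complex.I * ((t m * x : ℝ) : ℂ)) ∂μ) atTop (𝓝 0) := by
    intro t ht
    apply tendsto_of_subseq_tendsto
    intro ns hns
    obtain ⟨u, hu⟩ : ∃ u : ℕ → ℝ, u = fun m => t m / (2 * Real.pi) := ⟨_, rfl⟩
    obtain ⟨β, hβ⟩ : ∃ β : ℕ → ℝ, β = fun m => Int.fract (u m) := ⟨_, rfl⟩
    obtain ⟨nn, hnn⟩ : ∃ nn : ℕ → ℤ, nn = fun m => ⌊u m⌋ := ⟨_, rfl⟩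
    have hβmem : ∀ j : ℕ, β (ns j) ∈ Icc (0:ℝ) 1 := by
      intro j
      rw [hβ]
      exact ⟨Int.fract_nonneg _, (Int.fract_lt_one _).le⟩
    obtain ⟨β₀, hβ₀mem, ms, hms_mono, hms_tend⟩ := isCompact_Icc.tendsto_subseq hβmem
    refine ⟨ms, ?_⟩
    -- decomposition identity
    have hid : ∀ m : ℕ, ∀ x : ℝ,
        (Complex.I * (x : ℂ)) ^ k * Complex.exp (Complex.I * ((t m * x : ℝ) : ℂ))
        = ((Complex.I * (x : ℂ)) ^ k * Complex.exp (2 * Real.pi * Complex.I * (β m : ℂ) * x))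
            * ee (nn m) x := by
      intro m x
      rw [ee, mul_assoc, ← Complex.exp_add]
      congr 1
      congr 1
      have hreal : t m * x = 2 * Real.pi * β m * x + 2 * Real.pi * (nn m : ℝ) * x := by
        have h1 : (nn m : ℝ) + β m = u m := by
          rw [hβ, hnn]
          exact Int.floor_add_fract _
        have h2 : t m = 2 * Real.pi * u m := by
          rw [hu]
          field_simp
        rw [h2, ← h1]
        ring
      calc Complex.I * ((t m * x : ℝ) : ℂ)
          = ((t m * x : ℝ) : ℂ) * Complex.I := by ring
        _ = ((2 * Real.pi * β m * x + 2 * Real.pi * (nn m : ℝ) * x : ℝ) : ℂ) * Complex.I := by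
            rw [hreal]
        _ = 2 * Real.pi * Complex.I * (β m : ℂ) * x
            + 2 * Real.pi * Complex.I * ((nn m : ℤ) : ℂ) * x := by
            push_cast
            ring
    -- the fixed continuous function
    have hgcont : Continuous (fun x : ℝ =>
        (Complex.I * (x : ℂ)) ^ k * Complex.exp (2 * Real.pi * Complex.I * (β₀ : ℂ) * x)) := by
      apply Continuous.mul
      · exact (continuous_const.mul Complex.continuous_ofReal).pow k
      · exact Complex.continuous_exp.comp (by continuity)
    have hkey := key hae hc _ hgcont
    -- n-sequence tends to cofinite
    have htns : Tendsto (fun j => |t (ns (ms j))|) atTop atTop :=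
      ht.comp (hns.comp hms_mono.tendsto_atTop)
    have hnncof : Tendsto (fun j => nn (ns (ms j))) atTop cofinite := by
      apply int_tendsto_cofinite
      apply tendsto_atTop_mono (f := fun j => |t (ns (ms j))| / (2 * Real.pi) - 1)
      · intro j
        obtain ⟨r, hr⟩ : ∃ r : ℝ, r = u (ns (ms j)) := ⟨_, rfl⟩
        have h1 : |r| - |(⌊r⌋:ℝ)| ≤ |r - ⌊r⌋| := abs_sub_abs_le_abs_sub _ _
        have h2 : |r - (⌊r⌋:ℝ)| ≤ 1 := by
          rw [abs_of_nonneg (by linarith [Int.floor_le r])]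
          linarith [Int.lt_floor_add_one r]
        have h3 : |t (ns (ms j))| / (2 * Real.pi) = |r| := by
          rw [hr, hu]
          simp only
          rw [abs_div, abs_of_pos hπ]
        have h4 : nn (ns (ms j)) = ⌊r⌋ := by
          rw [hnn, hr]
        rw [h3, h4]
        linarith
      · apply tendsto_atTop_add_const_right
        exact htns.atTop_div_const hπ
    have hmain : Tendsto (fun j => ∫ x, ((Complex.I * (x : ℂ)) ^ k *
        Complex.exp (2 * Real.pi * Complex.I * (β₀ : ℂ) * x)) * ee (nn (ns (ms j))) x ∂μ)
        atTop (𝓝 0) := hkey.comp hnncof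
    -- integrability
    have hint : ∀ (b : ℝ) (n : ℤ), Integrable (fun x : ℝ =>
        ((Complex.I * (x : ℂ)) ^ k * Complex.exp (2 * Real.pi * Complex.I * (b : ℂ) * x))
          * ee n x) μ := by
      intro b n
      apply integrable_bdd
      · apply Continuous.aestronglyMeasurable
        apply Continuous.mul _ (ee_continuous n)
        apply Continuous.mul
        · exact (continuous_const.mul Complex.continuous_ofReal).pow k
        · exact Complex.continuous_exp.comp (by continuity)
      · filter_upwards [hae] with x hx
        rw [norm_mul, ee_norm, mul_one, norm_mul, norm_pow, norm_mul]
        have hexp : ‖Complex.exp (2 * Real.pi * Complex.I * (b : ℂ) * x)‖ = 1 := by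
          simp only [Complex.norm_exp]
          have : (2 * (Real.pi:ℂ) * Complex.I * (b:ℂ) * x).re = 0 := by
            simp [Complex.mul_re, Complex.mul_im]
          rw [show ((2:ℂ) * Real.pi * Complex.I * (b:ℂ) * x)
            = (2 * (Real.pi:ℂ) * Complex.I * (b:ℂ) * x) from by ring, this, Real.exp_zero]
        rw [hexp, mul_one, Complex.norm_I, one_mul, Complex.norm_real, Real.norm_eq_abs]
        calc |x| ^ k ≤ 1 ^ k := by
              apply pow_le_pow_left₀ (abs_nonneg x)
              rw [abs_of_nonneg hx.1]; exact hx.2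
          _ = (1:ℝ) := one_pow k
    -- difference tends to zero
    have hdiff : Tendsto (fun j => (∫ x, (Complex.I * (x : ℂ)) ^ k *
        Complex.exp (Complex.I * ((t (ns (ms j)) * x : ℝ) : ℂ)) ∂μ)
        - ∫ x, ((Complex.I * (x : ℂ)) ^ k *
            Complex.exp (2 * Real.pi * Complex.I * (β₀ : ℂ) * x)) * ee (nn (ns (ms j))) x ∂μ)
        atTop (𝓝 0) := by
      have hβdist : Tendsto (fun j => |β (ns (ms j)) - β₀|) atTop (𝓝 0) := by
        have := hms_tend
        rw [tendsto_iff_dist_tendsto_zero] at this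
        simpa [Real.dist_eq] using this
      apply squeeze_zero_norm' (a := fun j => 4 * Real.pi * |β (ns (ms j)) - β₀| * (μ Set.univ).toReal)
      · have hev : ∀ᶠ j in atTop, 2 * Real.pi * |β (ns (ms j)) - β₀| ≤ 1 := by
          have h4 : Tendsto (fun j => 2 * Real.pi * |β (ns (ms j)) - β₀|) atTop (𝓝 0) := by
            simpa using hβdist.const_mul (2 * Real.pi)
          filter_upwards [h4.eventually_lt_const (by norm_num : (0:ℝ) < 1)] with j hj
          exact hj.le
        filter_upwards [hev] with j hj
        have heq : ∀ x : ℝ, (Complex.I * (x : ℂ)) ^ k *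
            Complex.exp (Complex.I * ((t (ns (ms j)) * x : ℝ) : ℂ))
            = ((Complex.I * (x : ℂ)) ^ k *
              Complex.exp (2 * Real.pi * Complex.I * (β (ns (ms j)) : ℂ) * x))
              * ee (nn (ns (ms j))) x := hid (ns (ms j))
        rw [show (∫ x, (Complex.I * (x : ℂ)) ^ k *
            Complex.exp (Complex.I * ((t (ns (ms j)) * x : ℝ) : ℂ)) ∂μ)
            = ∫ x, ((Complex.I * (x : ℂ)) ^ k *
              Complex.exp (2 * Real.pi * Complex.I * (β (ns (ms j)) : ℂ) * x))
              * ee (nn (ns (ms j))) x ∂μ from by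
          congr 1
          ext x
          exact heq x]
        rw [← integral_sub (hint _ _) (hint _ _)]
        apply norm_integral_le_of_norm_le_const
        filter_upwards [hae] with x hx
        rw [show ((Complex.I * (x : ℂ)) ^ k *
              Complex.exp (2 * Real.pi * Complex.I * (β (ns (ms j)) : ℂ) * x))
              * ee (nn (ns (ms j))) x
            - ((Complex.I * (x : ℂ)) ^ k *
              Complex.exp (2 * Real.pi * Complex.I * (β₀ : ℂ) * x)) * ee (nn (ns (ms j))) x
          = ((Complex.I * (x : ℂ)) ^ k *
              (Complex.exp (2 * Real.pi * Complex.I * (β (ns (ms j)) : ℂ) * x)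
              - Complex.exp (2 * Real.pi * Complex.I * (β₀ : ℂ) * x)))
              * ee (nn (ns (ms j))) x from by ring]
        rw [norm_mul, ee_norm, mul_one, norm_mul, norm_pow, norm_mul, Complex.norm_I, one_mul,
          Complex.norm_real, Real.norm_eq_abs]
        have h5 : |x| ^ k ≤ 1 := by
          calc |x| ^ k ≤ 1 ^ k := by
                apply pow_le_pow_left₀ (abs_nonneg x)
                rw [abs_of_nonneg hx.1]; exact hx.2
            _ = (1:ℝ) := one_pow k
        calc |x| ^ k * ‖Complex.exp (2 * Real.pi * Complex.I * (β (ns (ms j)) : ℂ) * x)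
              - Complex.exp (2 * Real.pi * Complex.I * (β₀ : ℂ) * x)‖
            ≤ 1 * (4 * Real.pi * |β (ns (ms j)) - β₀|) := by
              apply mul_le_mul h5 (exp2pi_diff _ _ _ hx hj) (norm_nonneg _) zero_le_one
          _ = 4 * Real.pi * |β (ns (ms j)) - β₀| := one_mul _
      · have := (hβdist.const_mul (4 * Real.pi)).mul_const (μ Set.univ).toReal
        simpa [mul_comm] using this
    have := hdiff.add hmain
    rw [add_zero] at this
    apply this.congr
    intro j
    ring
  -- reduce cocompact to the two ends
  rw [cocompact_eq_atBot_atTop, tendsto_sup]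
  constructor
  · rw [tendsto_iff_seq_tendsto]
    intro v hv
    apply claim
    apply tendsto_atTop_mono (fun m => neg_le_abs (v m))
    exact tendsto_neg_atBot_atTop.comp hv
  · rw [tendsto_iff_seq_tendsto]
    intro v hv
    apply claim
    apply tendsto_atTop_mono (fun m => le_abs_self (v m))
    exact hv
end
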